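/- arXiv:0909.2108 — 4 statements merged into one kernel-verified Lean document; each statement's English description precedes it below -/
import Mathlib

section
/- Assume p ∈ (1/2,1) and let f_c < a < b < 1. Then almost surely, lim_{n→∞} (1/n) |R_n ∩ (a,b)| = p(b-a), where |·| denotes cardinality. -/
open MeasureTheory ProbabilityTheory Filter Topology

noncomputable def evoS {Ω : Type*} (B U : ℕ → Ω → ℝ) (ω : Ω) : ℕ → Finset ℝ
  | 0 => ∅
  | n + 1 =>
      let S := evoS B U ω n
      if B (n + 1) ω = 1 then insert (U (n + 1) ω) S
      else if h : S.Nonempty then S.erase (S.min' h) else ∅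

/-- `R n = S n ∩ (f_c, 1)`. -/
noncomputable def evoR {Ω : Type*} (fc : ℝ) (B U : ℕ → Ω → ℝ) (ω : Ω) (n : ℕ) : Finset ℝ :=
  (evoS B U ω n).filter (fun x => fc < x ∧ x < 1)

/-- The step function. -/
noncomputable def xi (x : ℝ) (q : ℝ × ℝ) : ℝ :=
  Set.indicator ((Prod.fst ⁻¹' {1}) ∩ (Prod.snd ⁻¹' Set.Iio x)) (fun _ => 1) q
  - Set.indicator (Prod.fst ⁻¹' {(0:ℝ)}) (fun _ => 1) q

lemma xi_of_zero (x u : ℝ) : xi x (0, u) = -1 := by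
  simp [xi, Set.indicator_apply]

lemma xi_of_one (x u : ℝ) : xi x (1, u) = if u < x then 1 else 0 := by
  by_cases h : u < x <;> simp [xi, Set.indicator_apply, h]

section det

variable {Ω : Type*} (B U : ℕ → Ω → ℝ) (ω : Ω)

lemma evoS_succ (n : ℕ) :
    evoS B U ω (n + 1) =
      if B (n + 1) ω = 1 then insert (U (n + 1) ω) (evoS B U ω n)
      else if h : (evoS B U ω n).Nonempty then
        (evoS B U ω n).erase ((evoS B U ω n).min' h) else ∅ := rfl

lemma evoS_subset (n : ℕ) :
    evoS B U ω n ⊆ (Finset.range n).image (fun k => U (k + 1) ω) := by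
  induction n with
  | zero => simp [evoS]
  | succ n ih =>
      have himg : (Finset.range (n + 1)).image (fun k => U (k + 1) ω)
          = insert (U (n + 1) ω) ((Finset.range n).image (fun k => U (k + 1) ω)) := by
        rw [Finset.range_add_one, Finset.image_insert]
      have hsub : (Finset.range n).image (fun k => U (k + 1) ω)
          ⊆ (Finset.range (n + 1)).image (fun k => U (k + 1) ω) := by
        rw [himg]; exact Finset.subset_insert _ _
      rw [evoS_succ]
      split_ifs with h1 h2
      · rw [himg]
        exact Finset.insert_subset_insert _ ih
      · exact ((Finset.erase_subset _ _).trans ih).trans hsub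
      · simp

lemma lindley (x : ℝ) (n : ℕ)
    (hB : B (n + 1) ω = 0 ∨ B (n + 1) ω = 1)
    (hU : U (n + 1) ω ∉ evoS B U ω n) :
    (((evoS B U ω (n + 1)).filter (fun y => y < x)).card : ℝ)
      = max ((((evoS B U ω n).filter (fun y => y < x)).card : ℝ)
          + xi x (B (n + 1) ω, U (n + 1) ω)) 0 := by
  rcases hB with hB0 | hB1
  · have hne1 : B (n + 1) ω ≠ 1 := by rw [hB0]; norm_num
    have hxi : xi x (B (n + 1) ω, U (n + 1) ω) = -1 := by rw [hB0]; exact xi_of_zero x _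
    rw [evoS_succ, if_neg hne1, hxi]
    by_cases h : (evoS B U ω n).Nonempty
    · rw [dif_pos h]
      by_cases hm : (evoS B U ω n).min' h < x
      · have hmem : (evoS B U ω n).min' h ∈ (evoS B U ω n).filter (fun y => y < x) :=
          Finset.mem_filter.2 ⟨(evoS B U ω n).min'_mem h, hm⟩
        have hpos : 1 ≤ ((evoS B U ω n).filter (fun y => y < x)).card :=
          Finset.card_pos.2 ⟨_, hmem⟩
        have key : (((evoS B U ω n).erase ((evoS B U ω n).min' h)).filter
            (fun y => y < x)).card = ((evoS B U ω n).filter (fun y => y < x)).card - 1 := by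
          rw [Finset.filter_erase, Finset.card_erase_of_mem hmem]
        rw [key, Nat.cast_sub hpos]
        have h1 : (1:ℝ) ≤ (((evoS B U ω n).filter (fun y => y < x)).card : ℝ) := by
          exact_mod_cast hpos
        rw [max_eq_left (by linarith)]
        push_cast
        ring
      · have hempty : (evoS B U ω n).filter (fun y => y < x) = ∅ := by
          rw [Finset.filter_eq_empty_iff]
          intro y hy hyx
          exact hm (lt_of_le_of_lt ((evoS B U ω n).min'_le y hy) hyx)
        have hempty2 : ((evoS B U ω n).erase ((evoS B U ω n).min' h)).filter
            (fun y => y < x) = ∅ := by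
          apply Finset.subset_empty.1
          rw [← hempty]
          exact Finset.filter_subset_filter _ (Finset.erase_subset _ _)
        rw [hempty, hempty2]
        simp
    · rw [dif_neg h]
      have hSempty : evoS B U ω n = ∅ := Finset.not_nonempty_iff_eq_empty.1 h
      rw [hSempty]
      simp
  · have hne0 : B (n + 1) ω ≠ 0 := by rw [hB1]; norm_num
    have hxi : xi x (B (n + 1) ω, U (n + 1) ω) = if U (n + 1) ω < x then 1 else 0 := by
      rw [hB1]; exact xi_of_one x _
    rw [evoS_succ, if_pos hB1, hxi]
    by_cases hu : U (n + 1) ω < x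
    · have hnotmem : U (n + 1) ω ∉ (evoS B U ω n).filter (fun y => y < x) := fun hmem =>
        hU (Finset.mem_filter.1 hmem).1
      rw [Finset.filter_insert, if_pos hu, Finset.card_insert_of_notMem hnotmem, if_pos hu]
      rw [max_eq_left (by positivity)]
      push_cast
      ring
    · rw [Finset.filter_insert, if_neg hu, if_neg hu]
      rw [max_eq_left (by positivity)]
      ring

end det

lemma lindley_bounds (N W : ℕ → ℝ) (C : ℝ) (hN0 : N 0 = 0) (hW0 : W 0 = 0)
    (hrec : ∀ n, N (n + 1) = max (N n + (W (n + 1) - W n)) 0)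
    (hC : ∀ n, -W n ≤ C) :
    ∀ n, W n ≤ N n ∧ N n ≤ W n + max 0 C := by
  intro n
  induction n with
  | zero =>
      refine ⟨by rw [hN0, hW0], ?_⟩
      rw [hN0, hW0]
      have := le_max_left (0:ℝ) C
      linarith
  | succ n ih =>
      rw [hrec n]
      constructor
      · have h2 : W (n + 1) ≤ N n + (W (n + 1) - W n) := by linarith [ih.1]
        exact h2.trans (le_max_left _ _)
      · apply max_le
        · linarith [ih.2]
        · linarith [hC (n + 1), le_max_right (0:ℝ) C]

lemma tendsto_div_of_lindley (N W : ℕ → ℝ) (m : ℝ) (hm : 0 < m)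
    (hN0 : N 0 = 0) (hW0 : W 0 = 0)
    (hrec : ∀ n, N (n + 1) = max (N n + (W (n + 1) - W n)) 0)
    (hW : Tendsto (fun n : ℕ => W n / n) atTop (𝓝 m)) :
    Tendsto (fun n : ℕ => N n / n) atTop (𝓝 m) := by
  have hWtop : Tendsto W atTop atTop := by
    have h1 : Tendsto (fun n : ℕ => (W n / n) * (n : ℝ)) atTop atTop :=
      hW.pos_mul_atTop hm tendsto_natCast_atTop_atTop
    apply h1.congr'
    filter_upwards [eventually_ge_atTop 1] with n hn
    have hn0 : (n : ℝ) ≠ 0 := by positivity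
    field_simp
  obtain ⟨N₀, hN₀⟩ := eventually_atTop.1 (hWtop.eventually_ge_atTop 0)
  set C : ℝ := max ((Finset.range (N₀ + 1)).sup' (by simp) (fun k => -W k)) 0 with hCdef
  have hC : ∀ n, -W n ≤ C := by
    intro n
    rcases le_or_gt n N₀ with h | h
    · exact le_max_of_le_left (Finset.le_sup' (fun k => -W k)
        (Finset.mem_range.2 (Nat.lt_succ_of_le h)))
    · have := hN₀ n h.le
      have : -W n ≤ 0 := by linarith
      exact this.trans (le_max_right _ _)
  have hb := lindley_bounds N W C hN0 hW0 hrec hC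
  have hup : Tendsto (fun n : ℕ => (W n + max 0 C) / n) atTop (𝓝 m) := by
    have heq : (fun n : ℕ => (W n + max 0 C) / n)
        = fun n : ℕ => W n / n + (max 0 C) / n := by
      funext n; rw [add_div]
    rw [heq]
    simpa using hW.add (tendsto_const_div_atTop_nhds_zero_nat (max 0 C))
  refine tendsto_of_tendsto_of_tendsto_of_le_of_le' hW hup ?_ ?_
  · filter_upwards [eventually_ge_atTop 1] with n hn
    have hn0 : (0:ℝ) < n := by exact_mod_cast hn
    gcongr
    exact (hb n).1
  · filter_upwards [eventually_ge_atTop 1] with n hn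
    have hn0 : (0:ℝ) < n := by exact_mod_cast hn
    gcongr
    exact (hb n).2

lemma measurable_xi (x : ℝ) : Measurable (xi x) := by
  unfold xi
  exact (measurable_const.indicator
      ((measurable_fst (measurableSet_singleton 1)).inter
        (measurable_snd measurableSet_Iio))).sub
    (measurable_const.indicator (measurable_fst (measurableSet_singleton 0)))

lemma slln_xi {Ω : Type*} [MeasurableSpace Ω] (P : Measure Ω) [IsProbabilityMeasure P]
    (p : ℝ) (hp0 : 0 < p) (hp1 : p < 1)
    (B U : ℕ → Ω → ℝ)
    (hmB : ∀ n, Measurable (B n)) (hmU : ∀ n, Measurable (U n))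
    (hindep : iIndepFun (Sum.elim B U) P)
    (hBdist : ∀ n, Measure.map (B n) P
      = ENNReal.ofReal p • Measure.dirac (1 : ℝ) + ENNReal.ofReal (1 - p) • Measure.dirac (0 : ℝ))
    (hUdist : ∀ n, Measure.map (U n) P = volume.restrict (Set.Ioo (0 : ℝ) 1))
    (x : ℝ) (hx0 : 0 < x) (hx1 : x < 1) :
    ∀ᵐ ω ∂P, Tendsto
      (fun n : ℕ => (∑ i ∈ Finset.range n, xi x (B (i + 1) ω, U (i + 1) ω)) / n)
      atTop (𝓝 (p * x - (1 - p))) := by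
  have hmeasSum : ∀ i : ℕ ⊕ ℕ, Measurable (Sum.elim B U i) := by
    rintro (i | i)
    exacts [hmB i, hmU i]
  have hBU_indep : ∀ k, IndepFun (B k) (U k) P := fun k =>
    hindep.indepFun (show (Sum.inl k : ℕ ⊕ ℕ) ≠ Sum.inr k by simp)
  have hpairlaw : ∀ k, Measure.map (fun ω => (B k ω, U k ω)) P
      = (ENNReal.ofReal p • Measure.dirac (1 : ℝ)
          + ENNReal.ofReal (1 - p) • Measure.dirac (0 : ℝ)).prod
        (volume.restrict (Set.Ioo (0 : ℝ) 1)) := by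
    intro k
    rw [← hBdist k, ← hUdist k]
    exact (indepFun_iff_map_prod_eq_prod_map_map (hmB k).aemeasurable
      (hmU k).aemeasurable).1 (hBU_indep k)
  set X : ℕ → Ω → ℝ := fun k ω => xi x (B (k + 1) ω, U (k + 1) ω) with hX
  have hident : ∀ i, IdentDistrib (X i) (X 0) P P := by
    intro i
    have h1 : IdentDistrib (fun ω => (B (i + 1) ω, U (i + 1) ω))
        (fun ω => (B 1 ω, U 1 ω)) P P :=
      ⟨((hmB _).prodMk (hmU _)).aemeasurable, ((hmB _).prodMk (hmU _)).aemeasurable,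
        by rw [hpairlaw, hpairlaw]⟩
    exact h1.comp (measurable_xi x)
  have hpairindep : Pairwise fun i j => IndepFun (X i) (X j) P := by
    intro i j hij
    have h := hindep.indepFun_prodMk_prodMk hmeasSum
      (Sum.inl (i + 1)) (Sum.inr (i + 1)) (Sum.inl (j + 1)) (Sum.inr (j + 1))
      (by simp [hij]) (by simp) (by simp) (by simp [hij])
    exact h.comp (measurable_xi x) (measurable_xi x)
  -- integrability and integral
  set A : Set Ω := (B 1 ⁻¹' {1}) ∩ (U 1 ⁻¹' Set.Iio x) with hA
  set D : Set Ω := B 1 ⁻¹' {0} with hD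
  have hAmeas : MeasurableSet A := ((hmB 1) (measurableSet_singleton 1)).inter
    ((hmU 1) measurableSet_Iio)
  have hDmeas : MeasurableSet D := (hmB 1) (measurableSet_singleton 0)
  have heq : X 0 = fun ω => A.indicator (fun _ => (1 : ℝ)) ω
      - D.indicator (fun _ => (1 : ℝ)) ω := by
    funext ω
    have e1 : (Prod.fst ⁻¹' {(1:ℝ)} ∩ Prod.snd ⁻¹' Set.Iio x).indicator
        (fun _ => (1:ℝ)) (B 1 ω, U 1 ω) = A.indicator (fun _ => (1:ℝ)) ω := by
      by_cases h : B 1 ω = 1 ∧ U 1 ω < x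
      · rw [Set.indicator_of_mem (by simp [h.1, h.2]),
          Set.indicator_of_mem (by simp [hA, Set.mem_Iio, h.1, h.2])]
      · rw [Set.indicator_of_notMem (by simpa using h),
          Set.indicator_of_notMem (by simpa [hA] using h)]
    have e2 : (Prod.fst ⁻¹' {(0:ℝ)}).indicator (fun _ => (1:ℝ)) (B 1 ω, U 1 ω)
        = D.indicator (fun _ => (1:ℝ)) ω := by
      by_cases h : B 1 ω = 0
      · rw [Set.indicator_of_mem (by simp [h]), Set.indicator_of_mem (by simp [hD, h])]
      · rw [Set.indicator_of_notMem (by simpa using h),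
          Set.indicator_of_notMem (by simpa [hD] using h)]
    show xi x (B (0 + 1) ω, U (0 + 1) ω) = _
    rw [show (0 + 1 : ℕ) = 1 from rfl]
    unfold xi
    rw [e1, e2]
  have hint : Integrable (X 0) P := by
    rw [heq]
    exact ((integrable_const 1).indicator hAmeas).sub ((integrable_const 1).indicator hDmeas)
  have hPA : P A = ENNReal.ofReal p * ENNReal.ofReal x := by
    have h1 : P A = P (B 1 ⁻¹' {1}) * P (U 1 ⁻¹' Set.Iio x) :=
      (hBU_indep 1).measure_inter_preimage_eq_mul {1} (Set.Iio x)
        (measurableSet_singleton 1) measurableSet_Iio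
    have h2 : P (B 1 ⁻¹' {1}) = ENNReal.ofReal p := by
      rw [← Measure.map_apply (hmB 1) (measurableSet_singleton 1), hBdist 1]
      simp [Measure.dirac_apply, Set.indicator_apply]
    have h3 : P (U 1 ⁻¹' Set.Iio x) = ENNReal.ofReal x := by
      rw [← Measure.map_apply (hmU 1) measurableSet_Iio, hUdist 1,
        Measure.restrict_apply measurableSet_Iio]
      have hset : Set.Iio x ∩ Set.Ioo 0 1 = Set.Ioo 0 x := by
        ext y
        simp only [Set.mem_inter_iff, Set.mem_Iio, Set.mem_Ioo]
        constructor
        · rintro ⟨h1, h2, h3⟩; exact ⟨h2, h1⟩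
        · rintro ⟨h1, h2⟩; exact ⟨h2, h1, by linarith⟩
      rw [hset, Real.volume_Ioo, sub_zero]
    rw [h1, h2, h3]
  have hPD : P D = ENNReal.ofReal (1 - p) := by
    rw [hD, ← Measure.map_apply (hmB 1) (measurableSet_singleton 0), hBdist 1]
    simp [Measure.dirac_apply, Set.indicator_apply]
  have hintegral : ∫ ω, X 0 ω ∂P = p * x - (1 - p) := by
    rw [heq, integral_sub ((integrable_const 1).indicator hAmeas)
      ((integrable_const 1).indicator hDmeas),
      integral_indicator_const (1 : ℝ) hAmeas, integral_indicator_const (1 : ℝ) hDmeas,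
      measureReal_def, measureReal_def, hPA, hPD, ← ENNReal.ofReal_mul hp0.le, ENNReal.toReal_ofReal (by positivity),
      ENNReal.toReal_ofReal (by linarith)]
    simp
  have := strong_law_ae_real X hint hpairindep hident
  rw [hintegral] at this
  exact this


/-- Theorem (b): for `f_c < a < b < 1`, almost surely
`(1/n) * |R_n ∩ (a,b)| → p * (b - a)`. -/
theorem stmt0 {Ω : Type*} [MeasurableSpace Ω] (P : Measure Ω) [IsProbabilityMeasure P]
    (p : ℝ) (hp : 1 / 2 < p) (hp1 : p < 1)
    (B U : ℕ → Ω → ℝ)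
    (hmB : ∀ n, Measurable (B n)) (hmU : ∀ n, Measurable (U n))
    (hB01 : ∀ n ω, B n ω = 0 ∨ B n ω = 1)
    (hindep : iIndepFun (Sum.elim B U) P)
    (hBdist : ∀ n, Measure.map (B n) P
      = ENNReal.ofReal p • Measure.dirac (1 : ℝ) + ENNReal.ofReal (1 - p) • Measure.dirac (0 : ℝ))
    (hUdist : ∀ n, Measure.map (U n) P = volume.restrict (Set.Ioo (0 : ℝ) 1))
    (a b : ℝ) (ha : (1 - p) / p < a) (hab : a < b) (hb : b < 1) :
    ∀ᵐ ω ∂P, Tendsto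
      (fun n : ℕ =>
        (((evoR ((1 - p) / p) B U ω n).filter (fun x => a < x ∧ x < b)).card : ℝ) / n)
      atTop (nhds (p * (b - a))) := by
  have hp0 : 0 < p := by linarith
  have hq0 : 0 < 1 - p := by linarith
  have hfc0 : 0 < (1 - p) / p := by positivity
  have ha0 : 0 < a := lt_trans hfc0 ha
  have ha1 : a < 1 := lt_trans hab hb
  have hb0 : 0 < b := lt_trans ha0 hab
  -- SLLN for the two levels
  have hslla := slln_xi P p hp0 hp1 B U hmB hmU hindep hBdist hUdist a ha0 ha1
  have hsllb := slln_xi P p hp0 hp1 B U hmB hmU hindep hBdist hUdist b hb0 hb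
  -- a.s. the uniforms are pairwise distinct and avoid a
  have hpoint : ∀ (k : ℕ) (c : ℝ), P {ω | U k ω = c} = 0 := by
    intro k c
    have h1 : {ω | U k ω = c} = U k ⁻¹' {c} := rfl
    rw [h1, ← Measure.map_apply (hmU k) (measurableSet_singleton c), hUdist k,
      Measure.restrict_apply (measurableSet_singleton c)]
    exact measure_mono_null Set.inter_subset_left (Real.volume_singleton)
  have hne2 : ∀ i j : ℕ, i ≠ j → ∀ᵐ ω ∂P, U i ω ≠ U j ω := by
    intro i j hij
    have hUij : IndepFun (U i) (U j) P :=
      hindep.indepFun (show (Sum.inr i : ℕ ⊕ ℕ) ≠ Sum.inr j by simp [hij])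
    have hmap : Measure.map (fun ω => (U i ω, U j ω)) P
        = (volume.restrict (Set.Ioo (0 : ℝ) 1)).prod (volume.restrict (Set.Ioo (0 : ℝ) 1)) := by
      have h := (indepFun_iff_map_prod_eq_prod_map_map (hmU i).aemeasurable
        (hmU j).aemeasurable).1 hUij
      rw [hUdist i, hUdist j] at h
      exact h
    have hdiag : MeasurableSet {q : ℝ × ℝ | q.1 = q.2} :=
      measurableSet_eq_fun measurable_fst measurable_snd
    have hzero : P {ω | U i ω = U j ω} = 0 := by
      have h1 : {ω | U i ω = U j ω}
          = (fun ω => (U i ω, U j ω)) ⁻¹' {q : ℝ × ℝ | q.1 = q.2} := rfl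
      rw [h1, ← Measure.map_apply ((hmU i).prodMk (hmU j)) hdiag, hmap,
        Measure.prod_apply hdiag]
      have hfib : ∀ y : ℝ,
          (volume.restrict (Set.Ioo (0 : ℝ) 1)) (Prod.mk y ⁻¹' {q : ℝ × ℝ | q.1 = q.2}) = 0 := by
        intro y
        have : Prod.mk y ⁻¹' {q : ℝ × ℝ | q.1 = q.2} = {y} := by
          ext z; simp [eq_comm]
        rw [this]
        exact measure_singleton y
      simp [hfib]
    rw [Filter.eventually_iff, mem_ae_iff]
    convert hzero using 2
    ext ω
    simp
  have hdiff : ∀ᵐ ω ∂P, ∀ i j : ℕ, i ≠ j → U (i + 1) ω ≠ U (j + 1) ω := by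
    rw [ae_all_iff]
    intro i
    rw [ae_all_iff]
    intro j
    by_cases h : i = j
    · filter_upwards with ω hij
      exact absurd h hij
    · filter_upwards [hne2 (i + 1) (j + 1) (by omega)] with ω hω _
      exact hω
  have hnota : ∀ᵐ ω ∂P, ∀ k : ℕ, U (k + 1) ω ≠ a := by
    rw [ae_all_iff]
    intro k
    rw [Filter.eventually_iff, mem_ae_iff]
    convert hpoint (k + 1) a using 2
    ext ω
    simp
  filter_upwards [hdiff, hnota, hslla, hsllb] with ω hωd hωa hWa hWb
  -- deterministic endgame
  have hUnot : ∀ n, U (n + 1) ω ∉ evoS B U ω n := by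
    intro n hmem
    obtain ⟨k, hk, hkeq⟩ := Finset.mem_image.1 (evoS_subset B U ω n hmem)
    exact hωd k n (by have := Finset.mem_range.1 hk; omega) hkeq
  have hanot : ∀ n, a ∉ evoS B U ω n := by
    intro n hmem
    obtain ⟨k, hk, hkeq⟩ := Finset.mem_image.1 (evoS_subset B U ω n hmem)
    exact hωa k hkeq
  set W : ℝ → ℕ → ℝ := fun x n => ∑ i ∈ Finset.range n, xi x (B (i + 1) ω, U (i + 1) ω)
    with hWdef
  set N : ℝ → ℕ → ℝ := fun x n => (((evoS B U ω n).filter (fun y => y < x)).card : ℝ)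
    with hNdef
  have hrec : ∀ x : ℝ, ∀ n : ℕ, N x (n + 1) = max (N x n + (W x (n + 1) - W x n)) 0 := by
    intro x n
    have hWs : W x (n + 1) - W x n = xi x (B (n + 1) ω, U (n + 1) ω) := by
      rw [hWdef]
      simp only [Finset.sum_range_succ]
      ring
    rw [hWs]
    exact lindley B U ω x n (hB01 (n + 1) ω) (hUnot n)
  have hN0 : ∀ x : ℝ, N x 0 = 0 := by intro x; simp [hNdef, evoS]
  have hW0 : ∀ x : ℝ, W x 0 = 0 := by intro x; simp [hWdef]
  have hma : 0 < p * a - (1 - p) := by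
    have := (div_lt_iff₀ hp0).1 ha
    nlinarith
  have hmb : 0 < p * b - (1 - p) := by
    have := (div_lt_iff₀ hp0).1 ha
    nlinarith
  have hNa : Tendsto (fun n : ℕ => N a n / n) atTop (𝓝 (p * a - (1 - p))) :=
    tendsto_div_of_lindley (N a) (W a) _ hma (hN0 a) (hW0 a) (hrec a) hWa
  have hNb : Tendsto (fun n : ℕ => N b n / n) atTop (𝓝 (p * b - (1 - p))) :=
    tendsto_div_of_lindley (N b) (W b) _ hmb (hN0 b) (hW0 b) (hrec b) hWb
  have key : ∀ n : ℕ,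
      (((evoR ((1 - p) / p) B U ω n).filter (fun x => a < x ∧ x < b)).card : ℝ)
        = N b n - N a n := by
    intro n
    have h1 : (evoR ((1 - p) / p) B U ω n).filter (fun x => a < x ∧ x < b)
        = (evoS B U ω n).filter (fun y => a < y ∧ y < b) := by
      rw [evoR, Finset.filter_filter]
      apply Finset.filter_congr
      intro y _
      constructor
      · rintro ⟨_, h⟩; exact h
      · rintro ⟨h1, h2⟩; exact ⟨⟨lt_trans ha h1, lt_trans h2 hb⟩, h1, h2⟩
    have hsplit : (evoS B U ω n).filter (fun y => y < b)
        = (evoS B U ω n).filter (fun y => y < a)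
          ∪ (evoS B U ω n).filter (fun y => a < y ∧ y < b) := by
      ext y
      simp only [Finset.mem_union, Finset.mem_filter]
      constructor
      · rintro ⟨hy, hyb⟩
        rcases lt_trichotomy y a with h | h | h
        · exact Or.inl ⟨hy, h⟩
        · exact absurd (h ▸ hy) (hanot n)
        · exact Or.inr ⟨hy, h, hyb⟩
      · rintro (⟨hy, hya⟩ | ⟨hy, hya, hyb⟩)
        · exact ⟨hy, lt_trans hya hab⟩
        · exact ⟨hy, hyb⟩
    have hdisj : Disjoint ((evoS B U ω n).filter (fun y => y < a))
        ((evoS B U ω n).filter (fun y => a < y ∧ y < b)) := by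
      rw [Finset.disjoint_left]
      intro y h1 h2
      have := (Finset.mem_filter.1 h1).2
      have := (Finset.mem_filter.1 h2).2.1
      linarith
    have hcard : ((evoS B U ω n).filter (fun y => y < b)).card
        = ((evoS B U ω n).filter (fun y => y < a)).card
          + ((evoS B U ω n).filter (fun y => a < y ∧ y < b)).card := by
      rw [hsplit, Finset.card_union_of_disjoint hdisj]
    rw [h1, hNdef]
    have := congrArg (Nat.cast : ℕ → ℝ) hcard
    push_cast at this
    simp only []
    linarith
  have heq2 : (fun n : ℕ =>
      (((evoR ((1 - p) / p) B U ω n).filter (fun x => a < x ∧ x < b)).card : ℝ) / n)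
      = fun n : ℕ => N b n / n - N a n / n := by
    funext n
    rw [key n, sub_div]
  rw [heq2]
  have hfinal := hNb.sub hNa
  have : p * b - (1 - p) - (p * a - (1 - p)) = p * (b - a) := by ring
  rw [this] at hfinal
  exact hfinal
end

section
/- Assume p ∈ (1/2,1). Then almost surely the set L_n is empty for infinitely many times n, i.e., P(L_n = ∅ for infinitely many n) = 1. -/
open MeasureTheory ProbabilityTheory Filter

/-- `L n = S n ∩ (0, f_c)`. -/
noncomputable def evoL {Ω : Type*} (fc : ℝ) (B U : ℕ → Ω → ℝ) (ω : Ω) (n : ℕ) : Finset ℝ :=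
  (evoS B U ω n).filter (fun x => 0 < x ∧ x < fc)

namespace Stmt1Aux

/-- The step of the dominating random walk. -/
noncomputable def stepX {Ω : Type*} (fc : ℝ) (B U : ℕ → Ω → ℝ) (n : ℕ) (ω : Ω) : ℝ :=
  if B n ω = 1 then (if 0 < U n ω ∧ U n ω < fc then 1 else 0) else -1

/-- Partial sums of a sequence, using indices `1..n`. -/
noncomputable def wsum (x : ℕ → ℝ) (n : ℕ) : ℝ := ∑ k ∈ Finset.range n, x (k + 1)

/-- Running minimum of `wsum`. -/
noncomputable def mnW (x : ℕ → ℝ) : ℕ → ℝ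
  | 0 => 0
  | n + 1 => min (mnW x n) (wsum x (n + 1))

lemma stepX_cases {Ω : Type*} (fc : ℝ) (B U : ℕ → Ω → ℝ) (n : ℕ) (ω : Ω) :
    stepX fc B U n ω = -1 ∨ stepX fc B U n ω = 0 ∨ stepX fc B U n ω = 1 := by
  unfold stepX; split_ifs <;> tauto

lemma evoS_mem {Ω : Type*} {B U : ℕ → Ω → ℝ} {ω : Ω}
    (hU : ∀ k, 0 < U k ω ∧ U k ω < 1) :
    ∀ n, ∀ x ∈ evoS B U ω n, 0 < x ∧ x < 1 := by
  intro n
  induction n with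
  | zero => simp [evoS]
  | succ n ih =>
    intro x hx
    rw [evoS] at hx
    split_ifs at hx with h1 h2
    · rcases Finset.mem_insert.1 hx with rfl | hx
      · exact hU (n + 1)
      · exact ih x hx
    · exact ih x (Finset.mem_of_mem_erase hx)
    · simp at hx

lemma wsum_succ (x : ℕ → ℝ) (n : ℕ) : wsum x (n + 1) = wsum x n + x (n + 1) := by
  unfold wsum; rw [Finset.sum_range_succ]

/-- The key one-step inequality for the size of `L`. -/
lemma card_step {Ω : Type*} {fc : ℝ} {B U : ℕ → Ω → ℝ} {ω : Ω}
    (hfc : fc ≤ 1)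
    (hU : ∀ k, 0 < U k ω ∧ U k ω < 1) (n : ℕ) :
    ((evoL fc B U ω (n + 1)).card : ℝ) ≤
      max (((evoL fc B U ω n).card : ℝ) + stepX fc B U (n + 1) ω) 0 := by
  classical
  unfold evoL
  rw [evoS]
  by_cases h1 : B (n + 1) ω = 1
  · simp only [h1, if_true]
    unfold stepX
    rw [if_pos h1]
    by_cases h2 : 0 < U (n + 1) ω ∧ U (n + 1) ω < fc
    · rw [if_pos h2, Finset.filter_insert, if_pos h2]
      calc ((insert (U (n+1) ω) ((evoS B U ω n).filter _)).card : ℝ)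
          ≤ ((evoS B U ω n).filter (fun x => 0 < x ∧ x < fc)).card + 1 := by
            exact_mod_cast Nat.cast_le.2 (Finset.card_insert_le _ _)
        _ ≤ _ := le_max_left _ _
    · rw [if_neg h2, Finset.filter_insert, if_neg h2]
      exact le_max_of_le_left (by simp)
  · simp only [h1, if_false]
    unfold stepX
    rw [if_neg h1]
    by_cases h2 : (evoS B U ω n).Nonempty
    · rw [dif_pos h2]
      set S := evoS B U ω n with hS
      set m := S.min' h2 with hm
      by_cases h3 : (S.filter (fun x => 0 < x ∧ x < fc)).Nonempty
      · -- the minimum is in L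
        obtain ⟨y, hy⟩ := h3
        rw [Finset.mem_filter] at hy
        have hmS : m ∈ S := Finset.min'_mem _ _
        have hm0 : 0 < m := (evoS_mem hU n m hmS).1
        have hmfc : m < fc := lt_of_le_of_lt (Finset.min'_le _ _ hy.1) hy.2.2
        have hmL : m ∈ S.filter (fun x => 0 < x ∧ x < fc) :=
          Finset.mem_filter.2 ⟨hmS, hm0, hmfc⟩
        rw [Finset.filter_erase, Finset.card_erase_of_mem hmL]
        have hc : 1 ≤ (S.filter (fun x => 0 < x ∧ x < fc)).card :=
          Finset.card_pos.2 ⟨m, hmL⟩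
        refine le_max_of_le_left ?_
        rw [Nat.cast_sub hc]
        push_cast; linarith
      · rw [Finset.not_nonempty_iff_eq_empty] at h3
        rw [Finset.filter_erase, h3]
        simp
    · rw [dif_neg h2]
      simp
  done

lemma card_le_sub {Ω : Type*} {fc : ℝ} {B U : ℕ → Ω → ℝ} {ω : Ω}
    (hfc : fc ≤ 1) (hU : ∀ k, 0 < U k ω ∧ U k ω < 1) (n : ℕ) :
    ((evoL fc B U ω n).card : ℝ) ≤
      wsum (fun k => stepX fc B U k ω) n - mnW (fun k => stepX fc B U k ω) n := by
  set x := fun k => stepX fc B U k ω with hx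
  induction n with
  | zero => simp [evoL, evoS, wsum, mnW]
  | succ n ih =>
    have h1 := card_step (B := B) hfc hU n
    have h2 : ((evoL fc B U ω (n+1)).card : ℝ) ≤ max (wsum x (n+1) - mnW x n) 0 := by
      refine h1.trans ?_
      have : ((evoL fc B U ω n).card : ℝ) + stepX fc B U (n+1) ω
          ≤ wsum x (n+1) - mnW x n := by
        rw [wsum_succ]; have := ih; simp only [hx] at this ⊢; linarith
      exact max_le_max this le_rfl
    refine h2.trans_eq ?_
    show max (wsum x (n+1) - mnW x n) 0 = wsum x (n+1) - min (mnW x n) (wsum x (n+1))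
    rcases le_total (mnW x n) (wsum x (n+1)) with h | h
    · rw [min_eq_left h, max_eq_left (by linarith)]
    · rw [min_eq_right h, max_eq_right (by linarith), sub_self]

lemma mnW_le {x : ℕ → ℝ} : ∀ n, ∀ k ≤ n, mnW x n ≤ wsum x k := by
  intro n
  induction n with
  | zero => intro k hk; interval_cases k; simp [mnW, wsum]
  | succ n ih =>
    intro k hk
    rcases Nat.lt_or_ge k (n+1) with h | h
    · exact (min_le_left _ _).trans (ih k (Nat.lt_succ_iff.1 h))
    · have : k = n + 1 := le_antisymm hk h
      subst this
      exact min_le_right _ _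

lemma le_mnW {x : ℕ → ℝ} {c : ℝ} : ∀ n, (∀ k ≤ n, c ≤ wsum x k) → c ≤ mnW x n := by
  intro n
  induction n with
  | zero => intro h; simpa [mnW, wsum] using h 0 le_rfl
  | succ n ih =>
    intro h
    exact le_min (ih fun k hk => h k (hk.trans (Nat.le_succ n))) (h (n+1) le_rfl)


/-- Walk stopped upon leaving `(-K, N)`. -/
noncomputable def vwalk (K N : ℕ) (x : ℕ → ℝ) : ℕ → ℝ
  | 0 => 0
  | n + 1 =>
      if vwalk K N x n ≤ -(K : ℝ) ∨ (N : ℝ) ≤ vwalk K N x n then vwalk K N x n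
      else vwalk K N x n + x (n + 1)

variable {K N : ℕ} {x : ℕ → ℝ}

def IsStep (x : ℕ → ℝ) : Prop := ∀ k, x k = -1 ∨ x k = 0 ∨ x k = 1

lemma vwalk_int (hx : IsStep x) : ∀ n, ∃ i : ℤ, vwalk K N x n = i := by
  intro n
  induction n with
  | zero => exact ⟨0, by simp [vwalk]⟩
  | succ n ih =>
    obtain ⟨i, hi⟩ := ih
    rw [vwalk]
    split_ifs with h
    · exact ⟨i, hi⟩
    · rcases hx (n+1) with h1 | h1 | h1 <;> rw [h1, hi]
      · exact ⟨i - 1, by push_cast; ring⟩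
      · exact ⟨i, by push_cast; ring⟩
      · exact ⟨i + 1, by push_cast; ring⟩

lemma vwalk_bounds (hK : 1 ≤ K) (hN : 1 ≤ N) (hx : IsStep x) :
    ∀ n, -(K : ℝ) ≤ vwalk K N x n ∧ vwalk K N x n ≤ N := by
  intro n
  induction n with
  | zero =>
    constructor
    · simp [vwalk]
    · simp [vwalk]
  | succ n ih =>
    rw [vwalk]
    split_ifs with h
    · exact ih
    · push_neg at h
      obtain ⟨hl, hr⟩ := h
      obtain ⟨i, hi⟩ := vwalk_int (K := K) (N := N) hx n
      -- -K < i < N as integers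
      have hil' : -(K:ℝ) < (i:ℝ) := hi ▸ hl
      have hir' : (i:ℝ) < (N:ℝ) := hi ▸ hr
      have hil : -(K : ℤ) < i := by exact_mod_cast hil'
      have hir : i < (N : ℤ) := by exact_mod_cast hir'
      have h1 : -(K : ℝ) + 1 ≤ vwalk K N x n := by
        rw [hi]; exact_mod_cast Int.add_one_le_iff.2 hil
      have h2 : vwalk K N x n ≤ (N : ℝ) - 1 := by
        rw [hi]
        have : i + 1 ≤ (N : ℤ) := Int.add_one_le_iff.2 hir
        have : (i : ℝ) + 1 ≤ (N : ℝ) := by exact_mod_cast this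
        linarith
      rcases hx (n+1) with h3 | h3 | h3 <;> rw [h3] <;> constructor <;> linarith

lemma vwalk_absorb (h : vwalk K N x n ≤ -(K : ℝ) ∨ (N : ℝ) ≤ vwalk K N x n) :
    ∀ m, n ≤ m → vwalk K N x m = vwalk K N x n := by
  intro m hm
  induction m with
  | zero =>
    have : n = 0 := Nat.le_zero.1 hm
    rw [this]
  | succ m ih =>
    rcases Nat.lt_or_ge n (m+1) with h1 | h1
    · have hnm : n ≤ m := Nat.lt_succ_iff.1 h1
      have he := ih hnm
      rw [vwalk, he, if_pos h]
    · have : n = m + 1 := le_antisymm hm h1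
      rw [this]

lemma vwalk_stop_val (hK : 1 ≤ K) (hN : 1 ≤ N) (hx : IsStep x) :
    ∀ n, (vwalk K N x n ≤ -(K : ℝ) ∨ (N : ℝ) ≤ vwalk K N x n) →
      vwalk K N x n = -(K : ℝ) ∨ vwalk K N x n = (N : ℝ) := by
  intro n h
  obtain ⟨hl, hr⟩ := vwalk_bounds hK hN hx n
  rcases h with h | h
  · exact Or.inl (le_antisymm h hl)
  · exact Or.inr (le_antisymm hr h)

/-- A long enough run of `-1` steps forces stopping. -/
lemma vwalk_block (hK : 1 ≤ K) (hN : 1 ≤ N) (hx : IsStep x)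
    (n : ℕ) (h : ∀ j, n + 1 ≤ j → j ≤ n + (K + N) → x j = -1) :
    vwalk K N x (n + (K + N)) ≤ -(K : ℝ) ∨ (N : ℝ) ≤ vwalk K N x (n + (K + N)) := by
  by_contra hc
  push_neg at hc
  -- no stopping before n + (K+N) either
  have hns : ∀ j ≤ n + (K + N), ¬ (vwalk K N x j ≤ -(K : ℝ) ∨ (N : ℝ) ≤ vwalk K N x j) := by
    intro j hj hstop
    have := vwalk_absorb (n := j) hstop (n + (K + N)) hj
    rw [this] at hc
    rcases hstop with h' | h'
    · exact absurd h' (not_le.2 hc.1)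
    · exact absurd h' (not_le.2 hc.2)
  have key : ∀ t, t ≤ K + N → vwalk K N x (n + t) = vwalk K N x n - t := by
    intro t ht
    induction t with
    | zero => simp
    | succ t ih =>
      have ht' : t ≤ K + N := Nat.le_of_succ_le ht
      have h1 : n + t + 1 = n + (t+1) := by ring
      have h2 := hns (n + t) (by omega)
      rw [← h1, vwalk, if_neg h2, ih ht', h (n + t + 1) (by omega) (by omega)]
      push_cast; ring
  have hfin := key (K + N) le_rfl
  have hub := (vwalk_bounds hK hN hx n).2
  have : vwalk K N x (n + (K + N)) ≤ -(K : ℝ) := by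
    rw [hfin]; push_cast; linarith
  exact absurd this (not_le.2 hc.1)

/-- Before stopping, the stopped walk agrees with the free walk; in general its
value is some value of the free walk. -/
lemma vwalk_eq_wsum : ∀ n,
    (¬ (vwalk K N x n ≤ -(K : ℝ) ∨ (N : ℝ) ≤ vwalk K N x n) → vwalk K N x n = wsum x n)
    ∧ (∃ m ≤ n, vwalk K N x n = wsum x m) := by
  intro n
  induction n with
  | zero => exact ⟨fun _ => by simp [vwalk, wsum], 0, le_rfl, by simp [vwalk, wsum]⟩
  | succ n ih =>
    by_cases h : vwalk K N x n ≤ -(K : ℝ) ∨ (N : ℝ) ≤ vwalk K N x n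
    · have he : vwalk K N x (n+1) = vwalk K N x n := by rw [vwalk, if_pos h]
      refine ⟨fun hc => absurd (he ▸ h) hc, ?_⟩
      obtain ⟨m, hm, hme⟩ := ih.2
      exact ⟨m, hm.trans (Nat.le_succ n), he ▸ hme⟩
    · have he : vwalk K N x (n+1) = vwalk K N x n + x (n+1) := by rw [vwalk, if_neg h]
      have heq : vwalk K N x (n+1) = wsum x (n+1) := by
        rw [he, ih.1 h, wsum_succ]
      exact ⟨fun _ => heq, n+1, le_rfl, heq⟩

lemma vwalk_hit (hn : vwalk K N x n = -(K : ℝ)) :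
    ∃ m ≤ n, wsum x m ≤ -(K : ℝ) := by
  obtain ⟨m, hm, hme⟩ := (vwalk_eq_wsum (K := K) (N := N) (x := x) n).2
  exact ⟨m, hm, by rw [← hme, hn]⟩

lemma vwalk_congr {y : ℕ → ℝ} : ∀ n, (∀ k, 1 ≤ k → k ≤ n → x k = y k) →
    vwalk K N x n = vwalk K N y n := by
  intro n
  induction n with
  | zero => simp [vwalk]
  | succ n ih =>
    intro h
    have he := ih fun k hk1 hk2 => h k hk1 (hk2.trans (Nat.le_succ n))
    rw [vwalk, vwalk, he, h (n+1) (by omega) le_rfl]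

lemma measurable_vwalk : ∀ n, Measurable (fun x : ℕ → ℝ => vwalk K N x n) := by
  intro n
  induction n with
  | zero => simpa [vwalk] using measurable_const
  | succ n ih =>
    have : (fun x : ℕ → ℝ => vwalk K N x (n+1)) = fun x =>
        if vwalk K N x n ≤ -(K : ℝ) ∨ (N : ℝ) ≤ vwalk K N x n then vwalk K N x n
        else vwalk K N x n + x (n + 1) := by
      funext x; rw [vwalk]
    rw [this]
    have hs : MeasurableSet {x : ℕ → ℝ | vwalk K N x n ≤ -(K : ℝ) ∨ (N : ℝ) ≤ vwalk K N x n} := by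
      have : {x : ℕ → ℝ | vwalk K N x n ≤ -(K : ℝ) ∨ (N : ℝ) ≤ vwalk K N x n}
          = (fun x => vwalk K N x n) ⁻¹' (Set.Iic (-(K:ℝ)) ∪ Set.Ici (N:ℝ)) := by
        ext x; simp [Set.mem_union]
      rw [this]
      exact ih (measurableSet_Iic.union measurableSet_Ici)
    exact Measurable.ite hs ih (ih.add (measurable_pi_apply (n+1)))

lemma measurable_wsum (n : ℕ) : Measurable (fun x : ℕ → ℝ => wsum x n) := by
  unfold wsum
  exact Finset.measurable_sum _ (fun k _ => measurable_pi_apply (k+1))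


section Prob

variable {Ω : Type*} [MeasurableSpace Ω] (P : Measure Ω) [IsProbabilityMeasure P]
    {fc : ℝ} {B U : ℕ → Ω → ℝ}

lemma measurable_stepX (hmB : ∀ n, Measurable (B n)) (hmU : ∀ n, Measurable (U n)) (n : ℕ) :
    Measurable (stepX fc B U n) := by
  unfold stepX
  have h1 : MeasurableSet {ω | B n ω = 1} := (hmB n) (measurableSet_singleton 1)
  have h2 : MeasurableSet {ω | 0 < U n ω ∧ U n ω < fc} := by
    have : {ω | 0 < U n ω ∧ U n ω < fc} = (U n) ⁻¹' (Set.Ioo 0 fc) := rfl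
    rw [this]; exact (hmU n) measurableSet_Ioo
  exact Measurable.ite h1 (Measurable.ite h2 measurable_const measurable_const) measurable_const

lemma measurable_Xseq (hmB : ∀ n, Measurable (B n)) (hmU : ∀ n, Measurable (U n)) :
    Measurable (fun ω k => stepX fc B U k ω) :=
  measurable_pi_lambda _ (fun k => measurable_stepX hmB hmU k)

lemma measurable_elim (hmB : ∀ n, Measurable (B n)) (hmU : ∀ n, Measurable (U n)) :
    ∀ i : ℕ ⊕ ℕ, Measurable (Sum.elim B U i) := by
  rintro (n | n)
  · exact hmB n
  · exact hmU n

/-- Master independence lemma: a function of steps `1..m` is independent of a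
function of steps `n+1..n+L`, provided `m ≤ n`. -/
lemma indep_ft (hmB : ∀ n, Measurable (B n)) (hmU : ∀ n, Measurable (U n))
    (hindep : iIndepFun (Sum.elim B U) P)
    (m n L : ℕ) (hmn : m ≤ n) (F G : (ℕ → ℝ) → ℝ) (hFm : Measurable F) (hGm : Measurable G)
    (hF : ∀ x y : ℕ → ℝ, (∀ k, 1 ≤ k → k ≤ m → x k = y k) → F x = F y)
    (hG : ∀ x y : ℕ → ℝ, (∀ k, n + 1 ≤ k → k ≤ n + L → x k = y k) → G x = G y) :
    IndepFun (fun ω => F (fun k => stepX fc B U k ω)) (fun ω => G (fun k => stepX fc B U k ω)) P := by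
  classical
  set S : Finset (ℕ ⊕ ℕ) :=
    ((Finset.Icc 1 m).image Sum.inl) ∪ ((Finset.Icc 1 m).image Sum.inr) with hSdef
  set T : Finset (ℕ ⊕ ℕ) :=
    ((Finset.Icc (n+1) (n+L)).image Sum.inl) ∪ ((Finset.Icc (n+1) (n+L)).image Sum.inr) with hTdef
  have hmemS : ∀ k, 1 ≤ k → k ≤ m → (Sum.inl k ∈ S ∧ Sum.inr k ∈ S) := by
    intro k h1 h2
    constructor
    · exact Finset.mem_union_left _ (Finset.mem_image_of_mem _ (Finset.mem_Icc.2 ⟨h1, h2⟩))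
    · exact Finset.mem_union_right _ (Finset.mem_image_of_mem _ (Finset.mem_Icc.2 ⟨h1, h2⟩))
  have hmemT : ∀ k, n+1 ≤ k → k ≤ n+L → (Sum.inl k ∈ T ∧ Sum.inr k ∈ T) := by
    intro k h1 h2
    constructor
    · exact Finset.mem_union_left _ (Finset.mem_image_of_mem _ (Finset.mem_Icc.2 ⟨h1, h2⟩))
    · exact Finset.mem_union_right _ (Finset.mem_image_of_mem _ (Finset.mem_Icc.2 ⟨h1, h2⟩))
  have hST : Disjoint S T := by
    rw [Finset.disjoint_left]
    intro a ha hb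
    simp only [hSdef, hTdef, Finset.mem_union, Finset.mem_image, Finset.mem_Icc] at ha hb
    rcases ha with ⟨k, hk, he⟩ | ⟨k, hk, he⟩ <;> rcases hb with ⟨l, hl, he'⟩ | ⟨l, hl, he'⟩ <;>
      subst he <;>
      first
      | (injection he' with h; omega)
      | simp at he'
  have h0 := hindep.indepFun_finset S T hST (measurable_elim hmB hmU)
  -- reconstruction maps
  let ρ : (Finset (ℕ ⊕ ℕ)) → ((ℕ ⊕ ℕ) → Prop) → _ := fun _ _ => 0
  let ρS : (∀ i : S, ℝ) → (ℕ → ℝ) := fun g k =>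
    if h : 1 ≤ k ∧ k ≤ m then
      (if g ⟨Sum.inl k, (hmemS k h.1 h.2).1⟩ = 1 then
        (if 0 < g ⟨Sum.inr k, (hmemS k h.1 h.2).2⟩ ∧ g ⟨Sum.inr k, (hmemS k h.1 h.2).2⟩ < fc
          then 1 else 0)
       else -1)
    else 0
  let ρT : (∀ i : T, ℝ) → (ℕ → ℝ) := fun g k =>
    if h : n + 1 ≤ k ∧ k ≤ n + L then
      (if g ⟨Sum.inl k, (hmemT k h.1 h.2).1⟩ = 1 then
        (if 0 < g ⟨Sum.inr k, (hmemT k h.1 h.2).2⟩ ∧ g ⟨Sum.inr k, (hmemT k h.1 h.2).2⟩ < fc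
          then 1 else 0)
       else -1)
    else 0
  have hρS : Measurable ρS := by
    apply measurable_pi_lambda
    intro k
    by_cases h : 1 ≤ k ∧ k ≤ m
    · simp only [ρS, dif_pos h]
      have e1 : Measurable fun g : (∀ i : S, ℝ) => g ⟨Sum.inl k, (hmemS k h.1 h.2).1⟩ :=
        measurable_pi_apply _
      have e2 : Measurable fun g : (∀ i : S, ℝ) => g ⟨Sum.inr k, (hmemS k h.1 h.2).2⟩ :=
        measurable_pi_apply _
      refine Measurable.ite (e1 (measurableSet_singleton 1)) ?_ measurable_const
      have : {g : (∀ i : S, ℝ) | 0 < g ⟨Sum.inr k, (hmemS k h.1 h.2).2⟩ ∧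
          g ⟨Sum.inr k, (hmemS k h.1 h.2).2⟩ < fc}
          = (fun g : (∀ i : S, ℝ) => g ⟨Sum.inr k, (hmemS k h.1 h.2).2⟩) ⁻¹' (Set.Ioo 0 fc) := rfl
      exact Measurable.ite (this ▸ e2 measurableSet_Ioo) measurable_const measurable_const
    · simp only [ρS, dif_neg h]
      exact measurable_const
  have hρT : Measurable ρT := by
    apply measurable_pi_lambda
    intro k
    by_cases h : n + 1 ≤ k ∧ k ≤ n + L
    · simp only [ρT, dif_pos h]
      have e1 : Measurable fun g : (∀ i : T, ℝ) => g ⟨Sum.inl k, (hmemT k h.1 h.2).1⟩ :=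
        measurable_pi_apply _
      have e2 : Measurable fun g : (∀ i : T, ℝ) => g ⟨Sum.inr k, (hmemT k h.1 h.2).2⟩ :=
        measurable_pi_apply _
      refine Measurable.ite (e1 (measurableSet_singleton 1)) ?_ measurable_const
      have : {g : (∀ i : T, ℝ) | 0 < g ⟨Sum.inr k, (hmemT k h.1 h.2).2⟩ ∧
          g ⟨Sum.inr k, (hmemT k h.1 h.2).2⟩ < fc}
          = (fun g : (∀ i : T, ℝ) => g ⟨Sum.inr k, (hmemT k h.1 h.2).2⟩) ⁻¹' (Set.Ioo 0 fc) := rfl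
      exact Measurable.ite (this ▸ e2 measurableSet_Ioo) measurable_const measurable_const
    · simp only [ρT, dif_neg h]
      exact measurable_const
  have hcomp := h0.comp (hFm.comp hρS) (hGm.comp hρT)
  have heqS : ((F ∘ ρS) ∘ (fun ω (i : S) => Sum.elim B U i ω))
      = fun ω => F (fun k => stepX fc B U k ω) := by
    funext ω
    simp only [Function.comp_apply]
    apply hF
    intro k h1 h2
    simp only [ρS, dif_pos (⟨h1, h2⟩ : 1 ≤ k ∧ k ≤ m)]
    rfl
  have heqT : ((G ∘ ρT) ∘ (fun ω (i : T) => Sum.elim B U i ω))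
      = fun ω => G (fun k => stepX fc B U k ω) := by
    funext ω
    simp only [Function.comp_apply]
    apply hG
    intro k h1 h2
    simp only [ρT, dif_pos (⟨h1, h2⟩ : n + 1 ≤ k ∧ k ≤ n + L)]
    rfl
  rw [heqS, heqT] at hcomp
  exact hcomp

variable (p : ℝ)

lemma prob_B_one (hmB : ∀ n, Measurable (B n))
    (hBdist : ∀ n, Measure.map (B n) P
      = ENNReal.ofReal p • Measure.dirac (1 : ℝ) + ENNReal.ofReal (1 - p) • Measure.dirac (0 : ℝ))
    (hp0 : 0 < p) (hp1 : p < 1) (n : ℕ) :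
    P (B n ⁻¹' {1}) = ENNReal.ofReal p := by
  have h := hBdist n
  have : P (B n ⁻¹' {1}) = Measure.map (B n) P {1} :=
    (Measure.map_apply (hmB n) (measurableSet_singleton 1)).symm
  rw [this, h]
  simp [Measure.dirac_apply', measurableSet_singleton]

lemma prob_B_ne_one (hmB : ∀ n, Measurable (B n))
    (hBdist : ∀ n, Measure.map (B n) P
      = ENNReal.ofReal p • Measure.dirac (1 : ℝ) + ENNReal.ofReal (1 - p) • Measure.dirac (0 : ℝ))
    (hp0 : 0 < p) (hp1 : p < 1) (n : ℕ) :
    P (B n ⁻¹' {1})ᶜ = ENNReal.ofReal (1 - p) := by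
  rw [prob_compl_eq_one_sub ((hmB n) (measurableSet_singleton 1)),
    prob_B_one P p hmB hBdist hp0 hp1 n]
  rw [← ENNReal.ofReal_one, ← ENNReal.ofReal_sub _ hp0.le]

lemma prob_U_Ioo (hmU : ∀ n, Measurable (U n))
    (hUdist : ∀ n, Measure.map (U n) P = volume.restrict (Set.Ioo (0 : ℝ) 1))
    {a : ℝ} (ha0 : 0 ≤ a) (ha1 : a ≤ 1) (n : ℕ) :
    P (U n ⁻¹' Set.Ioo 0 a) = ENNReal.ofReal a := by
  have : P (U n ⁻¹' Set.Ioo 0 a) = Measure.map (U n) P (Set.Ioo 0 a) :=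
    (Measure.map_apply (hmU n) measurableSet_Ioo).symm
  rw [this, hUdist n, Measure.restrict_apply measurableSet_Ioo]
  have : Set.Ioo (0:ℝ) a ∩ Set.Ioo 0 1 = Set.Ioo 0 a := by
    apply Set.inter_eq_left.2
    intro y hy
    exact ⟨hy.1, lt_of_lt_of_le hy.2 ha1⟩
  rw [this, Real.volume_Ioo, sub_zero]

/-- The set where the step is `-1` is exactly where `B ≠ 1`. -/
lemma stepX_eq_neg_one_iff (ω : Ω) (n : ℕ) :
    stepX fc B U n ω = -1 ↔ B n ω ≠ 1 := by
  unfold stepX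
  split_ifs with h h2 <;> simp [h] <;> norm_num

/-- Expectation of a step is zero. -/
lemma integral_stepX (hmB : ∀ n, Measurable (B n)) (hmU : ∀ n, Measurable (U n))
    (hindep : iIndepFun (Sum.elim B U) P)
    (hBdist : ∀ n, Measure.map (B n) P
      = ENNReal.ofReal p • Measure.dirac (1 : ℝ) + ENNReal.ofReal (1 - p) • Measure.dirac (0 : ℝ))
    (hUdist : ∀ n, Measure.map (U n) P = volume.restrict (Set.Ioo (0 : ℝ) 1))
    (hp0 : 1/2 < p) (hp1 : p < 1) (hfc : fc = (1 - p)/p) (n : ℕ) :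
    ∫ ω, stepX fc B U n ω ∂P = 0 := by
  have hp0' : 0 < p := by linarith
  classical
  have hfc0 : 0 ≤ fc := by
    rw [hfc]; apply div_nonneg <;> linarith
  have hfc1 : fc ≤ 1 := by
    rw [hfc, div_le_one hp0']; linarith
  set A : Set Ω := (B n ⁻¹' {1}) ∩ (U n ⁻¹' Set.Ioo 0 fc) with hA
  set C : Set Ω := (B n ⁻¹' {1})ᶜ with hC
  have hAm : MeasurableSet A := ((hmB n) (measurableSet_singleton 1)).inter ((hmU n) measurableSet_Ioo)
  have hCm : MeasurableSet C := ((hmB n) (measurableSet_singleton 1)).compl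
  have hpt : stepX fc B U n = fun ω =>
      Set.indicator A (fun _ => (1:ℝ)) ω - Set.indicator C (fun _ => (1:ℝ)) ω := by
    funext ω
    unfold stepX
    by_cases h : B n ω = 1
    · by_cases h2 : 0 < U n ω ∧ U n ω < fc
      · have hωA : ω ∈ A := ⟨h, h2.1, h2.2⟩
        have hωC : ω ∉ C := by simp [hC, h]
        rw [if_pos h, if_pos h2, Set.indicator_of_mem hωA, Set.indicator_of_notMem hωC]
        ring
      · have hωA : ω ∉ A := by
          intro hh
          exact h2 ⟨hh.2.1, hh.2.2⟩
        have hωC : ω ∉ C := by simp [hC, h]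
        rw [if_pos h, if_neg h2, Set.indicator_of_notMem hωA, Set.indicator_of_notMem hωC]
        ring
    · have hωA : ω ∉ A := by
        intro hh
        exact h hh.1
      have hωC : ω ∈ C := h
      rw [if_neg h, Set.indicator_of_notMem hωA, Set.indicator_of_mem hωC]
      ring
  have hPA : P A = ENNReal.ofReal (1 - p) := by
    have hBU : IndepFun (B n) (U n) P := by
      have := hindep.indepFun (i := Sum.inl n) (j := Sum.inr n) (by simp)
      simpa using this
    have := hBU.measure_inter_preimage_eq_mul {(1:ℝ)} (Set.Ioo 0 fc)
      (measurableSet_singleton 1) measurableSet_Ioo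
    rw [hA, this, prob_B_one P p hmB hBdist hp0' hp1 n, prob_U_Ioo P hmU hUdist hfc0 hfc1 n,
      ← ENNReal.ofReal_mul hp0'.le, hfc]
    rw [mul_div_cancel₀ _ (ne_of_gt hp0')]
  have hPC : P C = ENNReal.ofReal (1 - p) := prob_B_ne_one P p hmB hBdist hp0' hp1 n
  rw [hpt]
  rw [integral_sub (Integrable.indicator (integrable_const 1) hAm)
    (Integrable.indicator (integrable_const 1) hCm)]
  rw [integral_indicator_const _ hAm, integral_indicator_const _ hCm, measureReal_def, measureReal_def, hPA, hPC]
  ring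

lemma prob_block (hmB : ∀ n, Measurable (B n))
    (hindep : iIndepFun (Sum.elim B U) P)
    (hBdist : ∀ n, Measure.map (B n) P
      = ENNReal.ofReal p • Measure.dirac (1 : ℝ) + ENNReal.ofReal (1 - p) • Measure.dirac (0 : ℝ))
    (hp0 : 0 < p) (hp1 : p < 1) (a L : ℕ) :
    P (⋂ j ∈ Finset.Icc (a+1) (a+L), {ω | stepX fc B U j ω = -1})
      = ENNReal.ofReal (1 - p) ^ L := by
  classical
  have hsets : ∀ j, {ω | stepX fc B U j ω = -1} = Sum.elim B U (Sum.inl j) ⁻¹' ({1}ᶜ) := by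
    intro j
    ext ω
    simp only [Set.mem_setOf_eq, Set.mem_preimage, Set.mem_compl_iff, Set.mem_singleton_iff,
      Sum.elim_inl]
    exact stepX_eq_neg_one_iff ω j
  set S : Finset (ℕ ⊕ ℕ) := (Finset.Icc (a+1) (a+L)).image Sum.inl with hS
  have hiter : (⋂ j ∈ Finset.Icc (a+1) (a+L), {ω | stepX fc B U j ω = -1})
      = ⋂ i ∈ S, Sum.elim B U i ⁻¹' (fun _ : ℕ ⊕ ℕ => ({1}ᶜ : Set ℝ)) i := by
    rw [hS]
    ext ω
    simp only [Set.mem_iInter, Finset.mem_image]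
    constructor
    · rintro h i ⟨j, hj, rfl⟩
      exact (hsets j) ▸ (h j hj)
    · intro h j hj
      have := h (Sum.inl j) ⟨j, hj, rfl⟩
      rw [← hsets j] at this
      exact this
  rw [hiter]
  rw [hindep.measure_inter_preimage_eq_mul S
    (fun i _ => (measurableSet_singleton (1:ℝ)).compl)]
  rw [hS, Finset.prod_image (by intro x _ y _ h; injection h)]
  have : ∀ j ∈ Finset.Icc (a+1) (a+L),
      P (Sum.elim B U (Sum.inl j) ⁻¹' ({1}ᶜ)) = ENNReal.ofReal (1 - p) := by
    intro j _
    have : Sum.elim B U (Sum.inl j) ⁻¹' ({1}ᶜ : Set ℝ) = (B j ⁻¹' {1})ᶜ := rfl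
    rw [this, prob_B_ne_one P p hmB hBdist hp0 hp1 j]
  rw [Finset.prod_congr rfl this, Finset.prod_const, Nat.card_Icc]
  congr 1
  omega

/-- Gambler's ruin: the free walk a.s. goes below `-K`. -/
lemma prob_hit (hmB : ∀ n, Measurable (B n)) (hmU : ∀ n, Measurable (U n))
    (hindep : iIndepFun (Sum.elim B U) P)
    (hBdist : ∀ n, Measure.map (B n) P
      = ENNReal.ofReal p • Measure.dirac (1 : ℝ) + ENNReal.ofReal (1 - p) • Measure.dirac (0 : ℝ))
    (hUdist : ∀ n, Measure.map (U n) P = volume.restrict (Set.Ioo (0 : ℝ) 1))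
    (hp : 1/2 < p) (hp1 : p < 1) (hfc : fc = (1 - p)/p) (K : ℕ) (hK : 1 ≤ K) :
    P {ω | ∃ m, wsum (fun k => stepX fc B U k ω) m ≤ -(K : ℝ)} = 1 := by
  classical
  have hp0' : (0:ℝ) < p := by linarith
  set q : ℝ := 1 - p with hq
  have hq0 : 0 < q := by rw [hq]; linarith
  have hq1 : q < 1 := by rw [hq]; linarith
  set X : Ω → ℕ → ℝ := fun ω k => stepX fc B U k ω with hX
  have hXmeas : Measurable X := measurable_Xseq hmB hmU
  have hstep : ∀ ω, IsStep (X ω) := fun ω k => stepX_cases fc B U k ω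
  set Hit : Set Ω := ⋃ m, {ω | wsum (X ω) m ≤ -(K : ℝ)} with hHit
  have hHitm : MeasurableSet Hit := by
    apply MeasurableSet.iUnion
    intro m
    exact ((measurable_wsum m).comp hXmeas) measurableSet_Iic
  have hHiteq : {ω | ∃ m, wsum (fun k => stepX fc B U k ω) m ≤ -(K : ℝ)} = Hit := by
    ext ω; simp [hHit, hX]
  rw [hHiteq]
  -- main step : for every N ≥ 1, P Hit ≥ N / (N + K)
  have main : ∀ N : ℕ, 1 ≤ N → (N : ℝ)/(N + K) ≤ (P Hit).toReal := by
    intro N hN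
    set L : ℕ := K + N with hL
    set C : ℝ := (K : ℝ) + N with hC
    have hC0 : 0 < C := by rw [hC]; push_cast; have : (1:ℝ) ≤ K := by exact_mod_cast hK
                           have : (1:ℝ) ≤ N := by exact_mod_cast hN
                           linarith
    set V : ℕ → Ω → ℝ := fun n ω => vwalk K N (X ω) n with hV
    have VM : ∀ n, Measurable (V n) := fun n => (measurable_vwalk n).comp hXmeas
    have Vbd : ∀ n ω, |V n ω| ≤ C := by
      intro n ω
      obtain ⟨h1, h2⟩ := vwalk_bounds hK hN (hstep ω) n
      rw [abs_le, hC]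
      constructor <;> [linarith [Nat.cast_nonneg (α := ℝ) N]; linarith [Nat.cast_nonneg (α := ℝ) K]]
    have VInt : ∀ n, Integrable (V n) P := by
      intro n
      refine (integrable_const C).mono' (VM n).aestronglyMeasurable ?_
      exact ae_of_all _ fun ω => by rw [Real.norm_eq_abs]; exact Vbd n ω
    -- expectation of the stopped walk is 0
    have EV : ∀ n, ∫ ω, V n ω ∂P = 0 := by
      intro n
      induction n with
      | zero => simp [hV, vwalk]
      | succ n ih =>
        set F : (ℕ → ℝ) → ℝ :=
          fun x => if -(K:ℝ) < vwalk K N x n ∧ vwalk K N x n < N then 1 else 0 with hF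
        set G : (ℕ → ℝ) → ℝ := fun x => x (n+1) with hG
        have hFm : Measurable F := by
          have hs : MeasurableSet {x : ℕ → ℝ | -(K:ℝ) < vwalk K N x n ∧ vwalk K N x n < N} := by
            have : {x : ℕ → ℝ | -(K:ℝ) < vwalk K N x n ∧ vwalk K N x n < N}
                = (fun x => vwalk K N x n) ⁻¹' (Set.Ioo (-(K:ℝ)) N) := rfl
            rw [this]
            exact (measurable_vwalk n) measurableSet_Ioo
          exact Measurable.ite hs measurable_const measurable_const
        have hGm : Measurable G := measurable_pi_apply (n+1)
        have hpt : V (n+1) = fun ω => V n ω + F (X ω) * G (X ω) := by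
          funext ω
          show vwalk K N (X ω) (n+1) = _
          rw [vwalk]
          by_cases h : vwalk K N (X ω) n ≤ -(K:ℝ) ∨ (N:ℝ) ≤ vwalk K N (X ω) n
          · rw [if_pos h]
            have hFc : ¬(-(K:ℝ) < vwalk K N (X ω) n ∧ vwalk K N (X ω) n < N) := by
              rcases h with h | h
              · exact fun hc => absurd hc.1 (not_lt.2 h)
              · exact fun hc => absurd hc.2 (not_lt.2 h)
            simp [hF, hV, if_neg hFc]
          · rw [if_neg h]
            push_neg at h
            simp [hF, hG, hV, if_pos h]
        have hFGm : Measurable (fun ω => F (X ω) * G (X ω)) :=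
          ((hFm.comp hXmeas).mul (hGm.comp hXmeas))
        have hFGint : Integrable (fun ω => F (X ω) * G (X ω)) P := by
          refine (integrable_const (1:ℝ)).mono' hFGm.aestronglyMeasurable ?_
          refine ae_of_all _ fun ω => ?_
          rw [Real.norm_eq_abs, abs_mul]
          have h1 : |F (X ω)| ≤ 1 := by
            rw [hF]; dsimp only; split_ifs <;> simp
          have h2 : |G (X ω)| ≤ 1 := by
            rcases hstep ω (n+1) with h | h | h <;> rw [hG] <;> dsimp only <;> rw [h] <;> norm_num
          calc |F (X ω)| * |G (X ω)| ≤ 1 * 1 := by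
                exact mul_le_mul h1 h2 (abs_nonneg _) zero_le_one
            _ = 1 := by norm_num
        have hind : IndepFun (fun ω => F (X ω)) (fun ω => G (X ω)) P := by
          apply indep_ft P hmB hmU hindep n n 1 le_rfl F G hFm hGm
          · intro x y h
            rw [hF]; dsimp only
            rw [vwalk_congr n h]
          · intro x y h
            rw [hG]; dsimp only
            exact h (n+1) le_rfl le_rfl
        have hG0 : ∫ ω, G (X ω) ∂P = 0 :=
          integral_stepX P p hmB hmU hindep hBdist hUdist hp hp1 hfc (n+1)
        rw [hpt, integral_add (VInt n) hFGint, ih]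
        have := hind.integral_fun_mul_eq_mul_integral ((hFm.comp hXmeas)).aestronglyMeasurable
          ((hGm.comp hXmeas)).aestronglyMeasurable
        rw [this, hG0]
        ring
    -- the three regions at time n
    set An : ℕ → Set Ω := fun n => {ω | V n ω = -(K:ℝ)} with hAn
    set Bn : ℕ → Set Ω := fun n => {ω | V n ω = (N:ℝ)} with hBn
    set Rn : ℕ → Set Ω := fun n => {ω | -(K:ℝ) < V n ω ∧ V n ω < N} with hRn
    have hAnm : ∀ n, MeasurableSet (An n) := fun n => (VM n) (measurableSet_singleton _)
    have hBnm : ∀ n, MeasurableSet (Bn n) := fun n => (VM n) (measurableSet_singleton _)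
    have hRnm : ∀ n, MeasurableSet (Rn n) := fun n => (VM n) measurableSet_Ioo
    have hKposR : (0:ℝ) < K := by exact_mod_cast hK
    have hNposR : (0:ℝ) < N := by exact_mod_cast hN
    have hcover : ∀ n ω, ω ∈ An n ∨ ω ∈ Bn n ∨ ω ∈ Rn n := by
      intro n ω
      by_cases h : vwalk K N (X ω) n ≤ -(K:ℝ) ∨ (N:ℝ) ≤ vwalk K N (X ω) n
      · rcases vwalk_stop_val hK hN (hstep ω) n h with h' | h'
        · exact Or.inl h'
        · exact Or.inr (Or.inl h')
      · push_neg at h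
        exact Or.inr (Or.inr h)
    have hdAB : ∀ n, Disjoint (An n) (Bn n) := by
      intro n
      rw [Set.disjoint_left]
      intro ω h1 h2
      rw [hAn] at h1; rw [hBn] at h2
      simp only [Set.mem_setOf_eq] at h1 h2
      rw [h1] at h2
      linarith
    have hdABR : ∀ n, Disjoint (An n ∪ Bn n) (Rn n) := by
      intro n
      rw [Set.disjoint_left]
      rintro ω (h1 | h1) h2 <;>
      · simp only [hAn, hBn, hRn, Set.mem_setOf_eq] at h1 h2
        rw [h1] at h2
        rcases h2 with ⟨h2a, h2b⟩
        linarith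
    have hsum : ∀ n, (P (An n)).toReal + (P (Bn n)).toReal + (P (Rn n)).toReal = 1 := by
      intro n
      have hu : An n ∪ Bn n ∪ Rn n = Set.univ := by
        ext ω
        simp only [Set.mem_union, Set.mem_univ, iff_true]
        rcases hcover n ω with h | h | h
        · exact Or.inl (Or.inl h)
        · exact Or.inl (Or.inr h)
        · exact Or.inr h
      have h1 : P (An n) + P (Bn n) + P (Rn n) = 1 := by
        rw [← measure_union (hdAB n) (hBnm n), ← measure_union (hdABR n) (hRnm n), hu,
          measure_univ]
      have := congrArg ENNReal.toReal h1
      rw [ENNReal.toReal_add (by finiteness) (by finiteness),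
        ENNReal.toReal_add (by finiteness) (by finiteness), ENNReal.toReal_one] at this
      exact this
    -- decomposition of the expectation
    have hdec : ∀ n, 0 = -(K:ℝ) * (P (An n)).toReal + (N:ℝ) * (P (Bn n)).toReal
        + ∫ ω, Set.indicator (Rn n) (V n) ω ∂P := by
      intro n
      have hptw : V n = fun ω => Set.indicator (An n) (fun _ => -(K:ℝ)) ω
          + Set.indicator (Bn n) (fun _ => (N:ℝ)) ω + Set.indicator (Rn n) (V n) ω := by
        funext ω
        rcases hcover n ω with h | h | h
        · have h2 : ω ∉ Bn n := fun hc => (Set.disjoint_left.1 (hdAB n)) h hc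
          have h3 : ω ∉ Rn n := fun hc => (Set.disjoint_left.1 (hdABR n)) (Or.inl h) hc
          rw [Set.indicator_of_mem h, Set.indicator_of_notMem h2, Set.indicator_of_notMem h3]
          simp only [hAn, Set.mem_setOf_eq] at h
          rw [h]; ring
        · have h2 : ω ∉ An n := fun hc => (Set.disjoint_left.1 (hdAB n)) hc h
          have h3 : ω ∉ Rn n := fun hc => (Set.disjoint_left.1 (hdABR n)) (Or.inr h) hc
          rw [Set.indicator_of_mem h, Set.indicator_of_notMem h2, Set.indicator_of_notMem h3]
          simp only [hBn, Set.mem_setOf_eq] at h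
          rw [h]; ring
        · have h2 : ω ∉ An n := fun hc => (Set.disjoint_left.1 (hdABR n)) (Or.inl hc) h
          have h3 : ω ∉ Bn n := fun hc => (Set.disjoint_left.1 (hdABR n)) (Or.inr hc) h
          rw [Set.indicator_of_mem h, Set.indicator_of_notMem h2, Set.indicator_of_notMem h3]
          ring
      have hIA : Integrable (Set.indicator (An n) (fun _ => -(K:ℝ))) P :=
        (integrable_const _).indicator (hAnm n)
      have hIB : Integrable (Set.indicator (Bn n) (fun _ => (N:ℝ))) P :=
        (integrable_const _).indicator (hBnm n)
      have hIR : Integrable (Set.indicator (Rn n) (V n)) P := (VInt n).indicator (hRnm n)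
      have hIAB : Integrable (fun ω => Set.indicator (An n) (fun _ => -(K:ℝ)) ω
          + Set.indicator (Bn n) (fun _ => (N:ℝ)) ω) P := hIA.add hIB
      have := EV n
      rw [hptw, integral_add hIAB hIR, integral_add hIA hIB,
        integral_indicator_const _ (hAnm n), integral_indicator_const _ (hBnm n)] at this
      rw [← this]
      simp [mul_comm, measureReal_def]
    have hIR_bd : ∀ n, |∫ ω, Set.indicator (Rn n) (V n) ω ∂P| ≤ C * (P (Rn n)).toReal := by
      intro n
      have h1 : |∫ ω, Set.indicator (Rn n) (V n) ω ∂P| ≤ ∫ ω, ‖Set.indicator (Rn n) (V n) ω‖ ∂P := by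
        rw [← Real.norm_eq_abs]
        exact norm_integral_le_integral_norm _
      refine h1.trans ?_
      have h2 : ∀ ω, ‖Set.indicator (Rn n) (V n) ω‖ ≤ Set.indicator (Rn n) (fun _ => C) ω := by
        intro ω
        by_cases h : ω ∈ Rn n
        · rw [Set.indicator_of_mem h, Set.indicator_of_mem h, Real.norm_eq_abs]
          exact Vbd n ω
        · rw [Set.indicator_of_notMem h, Set.indicator_of_notMem h]
          simp
      have h3 : ∫ ω, ‖Set.indicator (Rn n) (V n) ω‖ ∂P ≤ ∫ ω, Set.indicator (Rn n) (fun _ => C) ω ∂P := by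
        refine integral_mono ((VInt n).indicator (hRnm n)).norm
          ((integrable_const _).indicator (hRnm n)) h2
      refine h3.trans_eq ?_
      rw [integral_indicator_const _ (hRnm n)]
      simp [mul_comm, measureReal_def]
    -- decay of the unstopped region
    have hqL0 : 0 < q ^ L := pow_pos hq0 L
    have hqL1 : q ^ L ≤ 1 := pow_le_one₀ hq0.le hq1.le
    have hdecay1 : ∀ m, (P (Rn ((m+1)*L))).toReal ≤ (P (Rn (m*L))).toReal * (1 - q^L) := by
      intro m
      set a : ℕ := m * L with ha
      set Em : Set Ω := ⋂ j ∈ Finset.Icc (a+1) (a+L), {ω | stepX fc B U j ω = -1} with hEm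
      have hstepXm : ∀ j, MeasurableSet {ω | stepX fc B U j ω = -1} := by
        intro j
        exact (measurable_stepX hmB hmU j) (measurableSet_singleton (-1))
      have hEmm : MeasurableSet Em := by
        rw [hEm]
        exact MeasurableSet.iInter fun j => MeasurableSet.iInter fun _ => hstepXm j
      have hPEm : P Em = ENNReal.ofReal q ^ L :=
        prob_block P p hmB hindep hBdist hp0' hp1 a L
      have hsub : Rn ((m+1)*L) ⊆ Rn a \ Em := by
        intro ω hω
        have hω' : -(K:ℝ) < vwalk K N (X ω) ((m+1)*L) ∧ vwalk K N (X ω) ((m+1)*L) < N := hω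
        have hnot : ¬ (vwalk K N (X ω) ((m+1)*L) ≤ -(K:ℝ) ∨ (N:ℝ) ≤ vwalk K N (X ω) ((m+1)*L)) := by
          push_neg
          exact ⟨hω'.1, hω'.2⟩
        have haml : a ≤ (m+1) * L := by rw [ha]; exact Nat.mul_le_mul_right L (Nat.le_succ m)
        constructor
        · by_contra hc
          rcases hcover a ω with h | h | h
          · have hs : vwalk K N (X ω) a ≤ -(K:ℝ) ∨ (N:ℝ) ≤ vwalk K N (X ω) a := Or.inl (le_of_eq h)
            have := vwalk_absorb hs ((m+1)*L) haml
            rw [this] at hnot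
            exact hnot hs
          · have hs : vwalk K N (X ω) a ≤ -(K:ℝ) ∨ (N:ℝ) ≤ vwalk K N (X ω) a :=
              Or.inr (ge_of_eq h)
            have := vwalk_absorb hs ((m+1)*L) haml
            rw [this] at hnot
            exact hnot hs
          · exact hc h
        · intro hc
          have hblk : ∀ j, a + 1 ≤ j → j ≤ a + (K + N) → X ω j = -1 := by
            intro j h1 h2
            have hj : j ∈ Finset.Icc (a+1) (a+L) := Finset.mem_Icc.2 ⟨h1, by rw [hL]; exact h2⟩
            have := Set.mem_iInter.1 (Set.mem_iInter.1 hc j) hj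
            exact this
          have := vwalk_block hK hN (hstep ω) a hblk
          have heq : a + (K + N) = (m+1) * L := by rw [ha, hL]; ring
          rw [heq] at this
          exact hnot this
      -- independence of the region and the block
      have hprod : P (Rn a ∩ Em) = P (Rn a) * P Em := by
        set F : (ℕ → ℝ) → ℝ :=
          fun x => if -(K:ℝ) < vwalk K N x a ∧ vwalk K N x a < N then 1 else 0 with hF
        set G : (ℕ → ℝ) → ℝ :=
          fun x => if ∀ j ∈ Finset.Icc (a+1) (a+L), x j = -1 then 1 else 0 with hG
        have hFm : Measurable F := by
          have hs : MeasurableSet {x : ℕ → ℝ | -(K:ℝ) < vwalk K N x a ∧ vwalk K N x a < N} := by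
            have : {x : ℕ → ℝ | -(K:ℝ) < vwalk K N x a ∧ vwalk K N x a < N}
                = (fun x => vwalk K N x a) ⁻¹' (Set.Ioo (-(K:ℝ)) N) := rfl
            rw [this]
            exact (measurable_vwalk a) measurableSet_Ioo
          exact Measurable.ite hs measurable_const measurable_const
        have hGm : Measurable G := by
          have hs : MeasurableSet {x : ℕ → ℝ | ∀ j ∈ Finset.Icc (a+1) (a+L), x j = -1} := by
            have : {x : ℕ → ℝ | ∀ j ∈ Finset.Icc (a+1) (a+L), x j = -1}
                = ⋂ j, ⋂ (_ : j ∈ Finset.Icc (a+1) (a+L)), {x : ℕ → ℝ | x j = -1} := by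
              ext x
              simp [Set.mem_iInter]
            rw [this]
            exact MeasurableSet.iInter fun j => MeasurableSet.iInter fun _ =>
              (measurable_pi_apply j) (measurableSet_singleton (-1))
          exact Measurable.ite hs measurable_const measurable_const
        have hind : IndepFun (fun ω => F (X ω)) (fun ω => G (X ω)) P := by
          apply indep_ft P hmB hmU hindep a a L le_rfl F G hFm hGm
          · intro x y h
            rw [hF]; dsimp only
            rw [vwalk_congr a h]
          · intro x y h
            rw [hG]; dsimp only
            have : (∀ j ∈ Finset.Icc (a+1) (a+L), x j = -1)
                ↔ (∀ j ∈ Finset.Icc (a+1) (a+L), y j = -1) := by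
              constructor <;> intro hh j hj <;>
                have hj' := Finset.mem_Icc.1 hj
              · rw [← h j hj'.1 hj'.2]; exact hh j hj
              · rw [h j hj'.1 hj'.2]; exact hh j hj
            simp only [this]
        have hRF : Rn a = (fun ω => F (X ω)) ⁻¹' {1} := by
          ext ω
          simp only [hRn, hF, Set.mem_setOf_eq, Set.mem_preimage, Set.mem_singleton_iff]
          split_ifs with h
          · simp [h, hV]
          · simp [h, hV]
        have hEG : Em = (fun ω => G (X ω)) ⁻¹' {1} := by
          ext ω
          constructor
          · intro hmem
            have hcond : ∀ j ∈ Finset.Icc (a+1) (a+L), X ω j = -1 := by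
              intro j hj
              exact Set.mem_iInter.1 (Set.mem_iInter.1 hmem j) hj
            have hval : G (X ω) = 1 := by rw [hG]; dsimp only; rw [if_pos hcond]
            exact Set.mem_preimage.2 (Set.mem_singleton_iff.2 hval)
          · intro hmem
            by_cases hcond : ∀ j ∈ Finset.Icc (a+1) (a+L), X ω j = -1
            · exact Set.mem_iInter.2 fun j => Set.mem_iInter.2 fun hj => hcond j hj
            · exfalso
              have hz : G (X ω) = 0 := by rw [hG]; dsimp only; rw [if_neg hcond]
              rw [Set.mem_preimage, Set.mem_singleton_iff] at hmem
              rw [hz] at hmem; norm_num at hmem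
        have := hind.measure_inter_preimage_eq_mul {(1:ℝ)} {(1:ℝ)}
          (measurableSet_singleton _) (measurableSet_singleton _)
        rw [← hRF, ← hEG] at this
        exact this
      have hsplit := measure_inter_add_diff (μ := P) (Rn a) hEmm
      have hsplit' : (P (Rn a ∩ Em)).toReal + (P (Rn a \ Em)).toReal = (P (Rn a)).toReal := by
        rw [← ENNReal.toReal_add (by finiteness) (by finiteness), hsplit]
      have hinter : (P (Rn a ∩ Em)).toReal = (P (Rn a)).toReal * q ^ L := by
        rw [hprod, hPEm, ENNReal.toReal_mul, ENNReal.toReal_pow, ENNReal.toReal_ofReal hq0.le]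
      have hmono : (P (Rn ((m+1)*L))).toReal ≤ (P (Rn a \ Em)).toReal :=
        ENNReal.toReal_mono (by finiteness) (measure_mono hsub)
      calc (P (Rn ((m+1)*L))).toReal ≤ (P (Rn a \ Em)).toReal := hmono
        _ = (P (Rn a)).toReal - (P (Rn a)).toReal * q ^ L := by
            rw [← hinter]; linarith [hsplit']
        _ = (P (Rn a)).toReal * (1 - q ^ L) := by ring
    have hdecay : ∀ m, (P (Rn (m*L))).toReal ≤ (1 - q^L)^m := by
      intro m
      induction m with
      | zero =>
        simp only [Nat.zero_mul, pow_zero]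
        exact (ENNReal.toReal_mono ENNReal.one_ne_top prob_le_one).trans_eq ENNReal.toReal_one
      | succ m ih =>
        refine (hdecay1 m).trans ?_
        rw [pow_succ]
        exact mul_le_mul_of_nonneg_right ih (by linarith)
    -- conclusion for fixed N
    have hAnHit : ∀ n, An n ⊆ Hit := by
      intro n ω hω
      obtain ⟨m, _, hm⟩ := vwalk_hit (K := K) (N := N) (x := X ω) (n := n) hω
      exact Set.mem_iUnion.2 ⟨m, hm⟩
    have han : ∀ n, (P (An n)).toReal ≤ (P Hit).toReal := fun n =>
      ENNReal.toReal_mono (by finiteness) (measure_mono (hAnHit n))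
    have hKN0 : (0:ℝ) < (K:ℝ) + N := by linarith
    have keyn : ∀ n, (N:ℝ) - ((N:ℝ) + C) * (P (Rn n)).toReal
        ≤ ((K:ℝ) + (N:ℝ)) * (P (An n)).toReal := by
      intro n
      set an := (P (An n)).toReal
      set bn := (P (Bn n)).toReal
      set rn := (P (Rn n)).toReal
      set In := ∫ ω, Set.indicator (Rn n) (V n) ω ∂P
      have e1 : (K:ℝ)*an = (N:ℝ)*bn + In := by
        have := hdec n
        linarith
      have e2 : an + bn = 1 - rn := by linarith [hsum n]
      have e3 : -(C*rn) ≤ In := (abs_le.1 (hIR_bd n)).1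
      calc (N:ℝ) - ((N:ℝ) + C) * rn = (N:ℝ)*(1 - rn) - C*rn := by ring
        _ ≤ (N:ℝ)*(1 - rn) + In := by linarith
        _ = (N:ℝ)*(an + bn) + In := by rw [e2]
        _ = (K:ℝ)*an + (N:ℝ)*an := by rw [mul_add]; linarith
        _ = ((K:ℝ) + (N:ℝ)) * an := by ring
    -- extract the bound
    have hNK0 : (0:ℝ) < (N:ℝ) + K := by linarith
    refine le_of_forall_sub_le ?_
    intro ε hε
    have hD0 : (0:ℝ) < (N:ℝ) + C + 1 := by linarith
    set ε' : ℝ := ε * ((N:ℝ)+K) / ((N:ℝ) + C + 1) with hε'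
    have hε'0 : 0 < ε' := div_pos (mul_pos hε hNK0) hD0
    have htend : Tendsto (fun m : ℕ => (1 - q^L)^m) atTop (nhds 0) :=
      tendsto_pow_atTop_nhds_zero_of_lt_one (by linarith) (by linarith)
    obtain ⟨m, hm⟩ := (htend.eventually (gt_mem_nhds hε'0)).exists
    set n := m * L with hn
    have hrn : (P (Rn n)).toReal ≤ ε' := (hdecay m).trans hm.le
    have h1 := keyn n
    have h2 := han n
    have h3 : (N:ℝ) - ((N:ℝ)+C)*ε' ≤ ((K:ℝ)+N) * (P Hit).toReal := by
      have hrmono : ((N:ℝ)+C) * (P (Rn n)).toReal ≤ ((N:ℝ)+C)*ε' :=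
        mul_le_mul_of_nonneg_left hrn (by linarith)
      have h4 : ((K:ℝ)+N)*(P (An n)).toReal ≤ ((K:ℝ)+N)*(P Hit).toReal :=
        mul_le_mul_of_nonneg_left h2 (by linarith)
      linarith
    have h5 : ((N:ℝ)+C)*ε' ≤ ε * ((N:ℝ)+K) := by
      have hdd : ((N:ℝ)+C)/((N:ℝ)+C+1) ≤ 1 := by
        rw [div_le_one hD0]; linarith
      have hnn : (0:ℝ) ≤ ε * ((N:ℝ)+K) := (mul_pos hε hNK0).le
      calc ((N:ℝ)+C)*ε' = (ε * ((N:ℝ)+K)) * (((N:ℝ)+C)/((N:ℝ)+C+1)) := by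
            rw [hε']; ring
        _ ≤ (ε * ((N:ℝ)+K)) * 1 := mul_le_mul_of_nonneg_left hdd hnn
        _ = ε * ((N:ℝ)+K) := mul_one _
    rw [sub_le_iff_le_add, div_le_iff₀ hNK0]
    nlinarith [h3, h5]
  -- now let N → ∞
  have hmain2 : ∀ η : ℝ, 0 < η → 1 - η ≤ (P Hit).toReal := by
    intro η hη
    set N : ℕ := max 1 (Nat.ceil ((K:ℝ)/η)) with hNdef
    have hN1 : 1 ≤ N := le_max_left _ _
    have hNR : (K:ℝ)/η ≤ N := by
      refine (Nat.le_ceil _).trans ?_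
      exact_mod_cast Nat.cast_le.2 (le_max_right 1 (Nat.ceil ((K:ℝ)/η)))
    have hKposR : (0:ℝ) < K := by exact_mod_cast hK
    have hNposR : (0:ℝ) < N := by
      have : (1:ℝ) ≤ N := by exact_mod_cast hN1
      linarith
    have hKη : (K:ℝ) ≤ η * N := by
      rw [div_le_iff₀ hη] at hNR; linarith
    have hfrac : (K:ℝ)/((N:ℝ)+K) ≤ η := by
      rw [div_le_iff₀ (by linarith)]
      have : η * (N:ℝ) ≤ η * ((N:ℝ)+K) := mul_le_mul_of_nonneg_left (by linarith) hη.le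
      linarith
    have h6 := main N hN1
    have h7 : (N:ℝ)/((N:ℝ)+K) = 1 - (K:ℝ)/((N:ℝ)+K) := by
      field_simp
      ring
    linarith [h6, hfrac]
  have h8 : 1 ≤ (P Hit).toReal := le_of_forall_sub_le fun η hη => hmain2 η hη
  have h9 : 1 ≤ P Hit := by
    rw [← ENNReal.ofReal_one]
    exact ENNReal.ofReal_le_of_le_toReal h8
  exact le_antisymm prob_le_one h9

lemma ae_U_mem (hmU : ∀ n, Measurable (U n))
    (hUdist : ∀ n, Measure.map (U n) P = volume.restrict (Set.Ioo (0 : ℝ) 1)) :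
    ∀ᵐ ω ∂P, ∀ k, 0 < U k ω ∧ U k ω < 1 := by
  rw [ae_all_iff]
  intro k
  have h1 : P ((U k) ⁻¹' (Set.Ioo 0 1)) = 1 := by
    rw [prob_U_Ioo P hmU hUdist zero_le_one le_rfl k, ENNReal.ofReal_one]
  rw [ae_iff]
  have h2 : {ω | ¬(0 < U k ω ∧ U k ω < 1)} = ((U k) ⁻¹' (Set.Ioo 0 1))ᶜ := by
    ext ω; simp [Set.mem_Ioo]
  rw [h2, prob_compl_eq_one_sub ((hmU k) measurableSet_Ioo), h1, tsub_self]

lemma ae_hit_all (hmB : ∀ n, Measurable (B n)) (hmU : ∀ n, Measurable (U n))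
    (hindep : iIndepFun (Sum.elim B U) P)
    (hBdist : ∀ n, Measure.map (B n) P
      = ENNReal.ofReal p • Measure.dirac (1 : ℝ) + ENNReal.ofReal (1 - p) • Measure.dirac (0 : ℝ))
    (hUdist : ∀ n, Measure.map (U n) P = volume.restrict (Set.Ioo (0 : ℝ) 1))
    (hp : 1/2 < p) (hp1 : p < 1) (hfc : fc = (1 - p)/p) :
    ∀ᵐ ω ∂P, ∀ K : ℕ, ∃ m, wsum (fun k => stepX fc B U k ω) m ≤ -((K : ℝ) + 1) := by
  rw [ae_all_iff]
  intro K
  have h1 := prob_hit P p hmB hmU hindep hBdist hUdist hp hp1 hfc (K + 1) (Nat.le_add_left 1 K)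
  have hm : MeasurableSet {ω | ∃ m, wsum (fun k => stepX fc B U k ω) m ≤ -((K + 1 : ℕ) : ℝ)} := by
    have : {ω | ∃ m, wsum (fun k => stepX fc B U k ω) m ≤ -((K + 1 : ℕ) : ℝ)}
        = ⋃ m, (fun ω => wsum (fun k => stepX fc B U k ω) m) ⁻¹' Set.Iic (-((K + 1 : ℕ) : ℝ)) := by
      ext ω; simp [Set.mem_iUnion]
    rw [this]
    exact MeasurableSet.iUnion fun m =>
      ((measurable_wsum m).comp (measurable_Xseq hmB hmU)) measurableSet_Iic
  rw [ae_iff]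
  have h2 : {ω | ¬ ∃ m, wsum (fun k => stepX fc B U k ω) m ≤ -((K : ℝ) + 1)}
      = {ω | ∃ m, wsum (fun k => stepX fc B U k ω) m ≤ -((K + 1 : ℕ) : ℝ)}ᶜ := by
    ext ω
    push_cast
    simp
  rw [h2, prob_compl_eq_one_sub hm, h1, tsub_self]

end Prob
end Stmt1Aux

open Stmt1Aux

/-- Almost surely, the set `L n` is empty for infinitely many times `n`. -/
theorem stmt1 {Ω : Type*} [MeasurableSpace Ω] (P : Measure Ω) [IsProbabilityMeasure P]
    (p : ℝ) (hp : 1 / 2 < p) (hp1 : p < 1)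
    (B U : ℕ → Ω → ℝ)
    (hmB : ∀ n, Measurable (B n)) (hmU : ∀ n, Measurable (U n))
    (hB01 : ∀ n ω, B n ω = 0 ∨ B n ω = 1)
    (hindep : iIndepFun (Sum.elim B U) P)
    (hBdist : ∀ n, Measure.map (B n) P
      = ENNReal.ofReal p • Measure.dirac (1 : ℝ) + ENNReal.ofReal (1 - p) • Measure.dirac (0 : ℝ))
    (hUdist : ∀ n, Measure.map (U n) P = volume.restrict (Set.Ioo (0 : ℝ) 1)) :
    ∀ᵐ ω ∂P, ∃ᶠ n in atTop, evoL ((1 - p) / p) B U ω n = ∅ := by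
  classical
  have hp0' : (0:ℝ) < p := by linarith
  set fc : ℝ := (1 - p)/p with hfc
  have hfc1 : fc ≤ 1 := by
    rw [hfc, div_le_one hp0']; linarith
  filter_upwards [ae_U_mem P hmU hUdist,
    ae_hit_all P p hmB hmU hindep hBdist hUdist hp hp1 hfc] with ω hU hhit
  rw [frequently_atTop]
  intro m
  set x : ℕ → ℝ := fun k => stepX fc B U k ω with hx
  obtain ⟨Kn, hKn⟩ := exists_nat_gt (-(mnW x m))
  obtain ⟨m₀, hm₀⟩ := hhit Kn
  have hgood : ∃ n, wsum x n < mnW x m := ⟨m₀, by rw [hx] at hm₀ ⊢; linarith⟩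
  set n₁ := Nat.find hgood with hn₁def
  have hn₁ : wsum x n₁ < mnW x m := Nat.find_spec hgood
  have hlt : ∀ k, k < n₁ → ¬(wsum x k < mnW x m) := fun k hk => Nat.find_min hgood hk
  have hn₁m : m ≤ n₁ := by
    by_contra h
    push_neg at h
    exact absurd hn₁ (not_lt.2 (mnW_le m n₁ h.le))
  refine ⟨n₁, hn₁m, ?_⟩
  have hmin : ∀ k ≤ n₁, wsum x n₁ ≤ wsum x k := by
    intro k hk
    rcases eq_or_lt_of_le hk with rfl | hklt
    · exact le_rfl
    · have h1 := hlt k hklt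
      push_neg at h1
      linarith
  have hle := card_le_sub (B := B) hfc1 hU n₁
  have h2 : wsum x n₁ ≤ mnW x n₁ := le_mnW n₁ hmin
  rw [← hx] at hle
  have h3 : ((evoL fc B U ω n₁).card : ℝ) ≤ 0 := by linarith
  rw [← Finset.card_eq_zero]
  have h4 : (0:ℝ) ≤ ((evoL fc B U ω n₁).card : ℝ) := Nat.cast_nonneg _
  exact_mod_cast le_antisymm h3 h4
end

section
/- Assume p ∈ (1/2,1) and let f_c < a < b < 1. Then for every n, surely (pointwise on the probability space), Σ_{k=1}^{n} B_k · 1_{(a,b)}(U_k) − t_n ≤ |R_n ∩ (a,b)| ≤ Σ_{k=1}^{n} B_k · 1_{(a,b)}(U_k), where 1_{(a,b)} is the indicator function of the interval (a,b). -/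
open MeasureTheory ProbabilityTheory Filter

/-- `t n = #{1 ≤ k ≤ n : L k = ∅}`. -/
noncomputable def evoT {Ω : Type*} (fc : ℝ) (B U : ℕ → Ω → ℝ) (ω : Ω) (n : ℕ) : ℕ :=
  Set.ncard {k : ℕ | 1 ≤ k ∧ k ≤ n ∧ evoL fc B U ω k = ∅}

lemma evoS_exists {Ω : Type*} (B U : ℕ → Ω → ℝ) (ω : Ω) :
    ∀ n, ∀ x ∈ evoS B U ω n, ∃ k, 1 ≤ k ∧ k ≤ n ∧ U k ω = x := by
  intro n
  induction n with
  | zero => simp [evoS]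
  | succ n ih =>
    intro x hx
    rw [evoS] at hx
    by_cases hB : B (n+1) ω = 1
    · simp only [hB, if_pos] at hx
      rcases Finset.mem_insert.mp hx with h | h
      · exact ⟨n+1, by omega, le_refl _, h.symm⟩
      · obtain ⟨k, h1, h2, h3⟩ := ih x h
        exact ⟨k, h1, by omega, h3⟩
    · simp only [hB, if_neg, if_false] at hx
      by_cases hne : (evoS B U ω n).Nonempty
      · rw [dif_pos hne] at hx
        obtain ⟨k, h1, h2, h3⟩ := ih x (Finset.mem_of_mem_erase hx)
        exact ⟨k, h1, by omega, h3⟩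
      · rw [dif_neg hne] at hx
        simp at hx

lemma evoKey {Ω : Type*} (fc a b : ℝ) (hfa : fc < a) (B U : ℕ → Ω → ℝ) (ω : Ω)
    (hinj : Function.Injective fun k : ℕ => U k ω) :
    ∀ n,
    ((Finset.Icc 1 n).filter (fun k => B k ω = 1 ∧ a < U k ω ∧ U k ω < b)).card
      ≤ ((evoS B U ω n).filter (fun x => a < x ∧ x < b)).card
        + ((Finset.Icc 1 n).filter (fun k => evoL fc B U ω k = ∅)).card
    ∧ ((evoS B U ω n).filter (fun x => a < x ∧ x < b)).card
      ≤ ((Finset.Icc 1 n).filter (fun k => B k ω = 1 ∧ a < U k ω ∧ U k ω < b)).card := by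
  intro n
  induction n with
  | zero => simp [evoS]
  | succ n ih =>
    obtain ⟨ih1, ih2⟩ := ih
    have hicc : Finset.Icc 1 (n+1) = insert (n+1) (Finset.Icc 1 n) := by
      ext k; simp [Nat.lt_succ_iff]; omega
    have hnm : (n+1) ∉ Finset.Icc 1 n := by simp
    -- abbreviations
    set S := evoS B U ω n with hS
    set c := (S.filter (fun x => a < x ∧ x < b)).card with hc
    set N := ((Finset.Icc 1 n).filter (fun k => B k ω = 1 ∧ a < U k ω ∧ U k ω < b)).card with hN
    set t := ((Finset.Icc 1 n).filter (fun k => evoL fc B U ω k = ∅)).card with ht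
    have hNcard : ((Finset.Icc 1 (n+1)).filter
        (fun k => B k ω = 1 ∧ a < U k ω ∧ U k ω < b)).card
        = (if B (n+1) ω = 1 ∧ a < U (n+1) ω ∧ U (n+1) ω < b then N + 1 else N) := by
      rw [hicc, Finset.filter_insert]
      split
      · rw [Finset.card_insert_of_notMem (fun h => hnm (Finset.mem_of_mem_filter _ h))]
      · rfl
    have htcard : ((Finset.Icc 1 (n+1)).filter (fun k => evoL fc B U ω k = ∅)).card
        = (if evoL fc B U ω (n+1) = ∅ then t + 1 else t) := by
      rw [hicc, Finset.filter_insert]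
      split
      · rw [Finset.card_insert_of_notMem (fun h => hnm (Finset.mem_of_mem_filter _ h))]
      · rfl
    by_cases hB : B (n+1) ω = 1
    · have hS' : evoS B U ω (n+1) = insert (U (n+1) ω) S := by rw [evoS, if_pos hB]
      have hu : U (n+1) ω ∉ S := by
        intro h
        obtain ⟨k, h1, h2, h3⟩ := evoS_exists B U ω n _ h
        have : k = n+1 := hinj h3
        omega
      have hccard : ((evoS B U ω (n+1)).filter (fun x => a < x ∧ x < b)).card
          = (if a < U (n+1) ω ∧ U (n+1) ω < b then c + 1 else c) := by
        rw [hS', Finset.filter_insert]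
        split
        · rw [Finset.card_insert_of_notMem (fun h => hu (Finset.mem_of_mem_filter _ h))]
        · rfl
      rw [hNcard, htcard, hccard]
      simp only [hB, true_and]
      split <;> split <;> omega
    · have hNcard' : ((Finset.Icc 1 (n+1)).filter
          (fun k => B k ω = 1 ∧ a < U k ω ∧ U k ω < b)).card = N := by
        rw [hNcard, if_neg (fun h => hB h.1)]
      by_cases hne : S.Nonempty
      · have hS' : evoS B U ω (n+1) = S.erase (S.min' hne) := by
          rw [evoS, if_neg hB, dif_pos hne]
        set m := S.min' hne with hm
        have hfe : (evoS B U ω (n+1)).filter (fun x => a < x ∧ x < b)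
            = (S.filter (fun x => a < x ∧ x < b)).erase m := by
          rw [hS', Finset.filter_erase]
        by_cases hmem : m ∈ S.filter (fun x => a < x ∧ x < b)
        · -- min removed is in (a,b): c decreases by 1, but L_{n+1} = ∅
          have hcc : ((evoS B U ω (n+1)).filter (fun x => a < x ∧ x < b)).card = c - 1 := by
            rw [hfe, Finset.card_erase_of_mem hmem]
          have hc1 : 1 ≤ c := Finset.card_pos.mpr ⟨m, hmem⟩
          have hma : a < m := (Finset.mem_filter.mp hmem).2.1
          have hLe : evoL fc B U ω (n+1) = ∅ := by
            rw [evoL, hS', Finset.eq_empty_iff_forall_notMem]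
            intro x hx
            obtain ⟨hx1, hx2, hx3⟩ := Finset.mem_filter.mp hx
            have := S.min'_le x (Finset.mem_of_mem_erase hx1)
            linarith
          rw [hNcard', htcard, if_pos hLe, hcc]
          omega
        · have hcc : ((evoS B U ω (n+1)).filter (fun x => a < x ∧ x < b)).card = c := by
            rw [hfe, Finset.erase_eq_of_notMem hmem]
          rw [hNcard', htcard, hcc]
          split <;> omega
      · have hS' : evoS B U ω (n+1) = ∅ := by rw [evoS, if_neg hB, dif_neg hne]
        have hc0 : c = 0 := by
          rw [hc, Finset.not_nonempty_iff_eq_empty.mp hne]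
          simp
        have hLe : evoL fc B U ω (n+1) = ∅ := by rw [evoL, hS']; simp
        rw [hNcard', htcard, if_pos hLe, hS']
        simp only [Finset.filter_empty, Finset.card_empty]
        omega

/-- Inequality (4): pointwise (for any realization in which all fitness values are
distinct, which happens almost surely),
`Σ_{k=1}^n B_k 1_{(a,b)}(U_k) − t_n ≤ |R_n ∩ (a,b)| ≤ Σ_{k=1}^n B_k 1_{(a,b)}(U_k)`. -/
theorem stmt5 {Ω : Type*} [MeasurableSpace Ω] (P : Measure Ω) [IsProbabilityMeasure P]
    (p : ℝ) (hp : 1 / 2 < p) (hp1 : p < 1)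
    (B U : ℕ → Ω → ℝ)
    (hmB : ∀ n, Measurable (B n)) (hmU : ∀ n, Measurable (U n))
    (hB01 : ∀ n ω, B n ω = 0 ∨ B n ω = 1)
    (hindep : iIndepFun (Sum.elim B U) P)
    (hBdist : ∀ n, Measure.map (B n) P
      = ENNReal.ofReal p • Measure.dirac (1 : ℝ) + ENNReal.ofReal (1 - p) • Measure.dirac (0 : ℝ))
    (hUdist : ∀ n, Measure.map (U n) P = volume.restrict (Set.Ioo (0 : ℝ) 1))
    (a b : ℝ) (ha : (1 - p) / p < a) (hab : a < b) (hb : b < 1)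
    (ω : Ω) (hinj : Function.Injective fun k : ℕ => U k ω) (n : ℕ) :
    (∑ k ∈ Finset.Icc 1 n, B k ω * Set.indicator (Set.Ioo a b) (fun _ => (1 : ℝ)) (U k ω))
        - (evoT ((1 - p) / p) B U ω n : ℝ)
      ≤ (((evoR ((1 - p) / p) B U ω n).filter (fun x => a < x ∧ x < b)).card : ℝ) ∧
    (((evoR ((1 - p) / p) B U ω n).filter (fun x => a < x ∧ x < b)).card : ℝ)
      ≤ ∑ k ∈ Finset.Icc 1 n, B k ω * Set.indicator (Set.Ioo a b) (fun _ => (1 : ℝ)) (U k ω) := by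
  set fc := (1 - p) / p with hfc
  -- the sum equals a cardinality
  have hsum : (∑ k ∈ Finset.Icc 1 n, B k ω * Set.indicator (Set.Ioo a b) (fun _ => (1 : ℝ)) (U k ω))
      = (((Finset.Icc 1 n).filter (fun k => B k ω = 1 ∧ a < U k ω ∧ U k ω < b)).card : ℝ) := by
    rw [← Finset.sum_boole]
    apply Finset.sum_congr rfl
    intro k _
    rcases hB01 k ω with h0 | h1
    · rw [h0, if_neg (fun h => by simp [h0] at h), zero_mul]
    · rw [h1, one_mul, Set.indicator_apply]
      by_cases hu : U k ω ∈ Set.Ioo a b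
      · rw [if_pos hu, if_pos ⟨rfl, hu.1, hu.2⟩]
      · rw [if_neg hu, if_neg (fun h => hu ⟨h.2.1, h.2.2⟩)]
  -- evoT as a Finset card
  have hT : evoT fc B U ω n
      = ((Finset.Icc 1 n).filter (fun k => evoL fc B U ω k = ∅)).card := by
    rw [evoT, ← Set.ncard_coe_finset]
    congr 1
    ext k
    simp [Finset.mem_filter, Finset.mem_Icc, and_assoc]
  -- the evoR filter equals the evoS filter
  have hfca : fc < a := ha
  have hR : (evoR fc B U ω n).filter (fun x => a < x ∧ x < b)
      = (evoS B U ω n).filter (fun x => a < x ∧ x < b) := by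
    ext x
    simp only [evoR, Finset.filter_filter, Finset.mem_filter]
    constructor
    · rintro ⟨hx, _, h⟩; exact ⟨hx, h⟩
    · rintro ⟨hx, h1, h2⟩; exact ⟨hx, ⟨lt_trans hfca h1, lt_trans h2 hb⟩, h1, h2⟩
  obtain ⟨k1, k2⟩ := evoKey fc a b hfca B U ω hinj n
  rw [hsum, hT, hR]
  constructor
  · have := (Nat.cast_le (α := ℝ)).mpr k1
    push_cast at this ⊢
    linarith
  · exact_mod_cast k2
end

section
/- Let p ∈ (1/2,1), q = 1-p, and let μ be an atomless Borel probability measure on ℝ. Consider the generalized model in which the fitnesses (U_n)_{n≥1} are i.i.d. with distribution μ instead of uniform on (0,1). Suppose f_c ∈ ℝ satisfies μ((-∞, f_c)) = q/p. Then for all real numbers a, b with f_c ≤ a < b, almost surely lim_{n→∞} (1/n) |S_n ∩ (a,b)| = p · μ((a,b)). -/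
open MeasureTheory ProbabilityTheory Filter

section Det

variable {Ω : Type*} (B U : ℕ → Ω → ℝ) (ω : Ω) (a b : ℝ)

/-- integer walk counting births below `a` minus death attempts -/
noncomputable def detX (n : ℕ) : ℤ :=
  ∑ i ∈ Finset.range n, ((if B (i+1) ω = 1 ∧ U (i+1) ω ≤ a then (1:ℤ) else 0)
      - (if B (i+1) ω = 0 then (1:ℤ) else 0))

/-- births into `(a,b)` -/
noncomputable def detBc (n : ℕ) : ℤ :=
  ∑ i ∈ Finset.range n, (if B (i+1) ω = 1 ∧ a < U (i+1) ω ∧ U (i+1) ω < b then (1:ℤ) else 0)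

/-- number of death attempts when no particle `≤ a` is present -/
noncomputable def detE : ℕ → ℕ
  | 0 => 0
  | n+1 => detE n +
      (if B (n+1) ω = 0 ∧ ((evoS B U ω n).filter (fun x => x ≤ a)) = ∅ then 1 else 0)

lemma det_main (hB : ∀ k, B k ω = 0 ∨ B k ω = 1)
    (hinj : ∀ i j, i ≠ j → U i ω ≠ U j ω) : ∀ n : ℕ,
    (∀ x ∈ evoS B U ω n, ∃ k, 1 ≤ k ∧ k ≤ n ∧ U k ω = x) ∧
    ((((evoS B U ω n).filter (fun x => x ≤ a)).card : ℤ) = detX B U ω a n + detE B U ω a n) ∧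
    (detBc B U ω a b n - detE B U ω a n
        ≤ (((evoS B U ω n).filter (fun x => a < x ∧ x < b)).card : ℤ)) ∧
    ((((evoS B U ω n).filter (fun x => a < x ∧ x < b)).card : ℤ) ≤ detBc B U ω a b n) ∧
    (detE B U ω a n = 0 ∨ ∃ j < n, (detE B U ω a n : ℤ) ≤ 1 - detX B U ω a j) := by
  intro n
  induction n with
  | zero => simp [evoS, detX, detBc, detE]
  | succ n IH =>
    obtain ⟨IH1, IH2, IH3, IH4, IH5⟩ := IH
    set S := evoS B U ω n with hS
    have hXs : detX B U ω a (n+1) = detX B U ω a n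
        + ((if B (n+1) ω = 1 ∧ U (n+1) ω ≤ a then (1:ℤ) else 0)
            - (if B (n+1) ω = 0 then (1:ℤ) else 0)) := Finset.sum_range_succ _ _
    have hBcs : detBc B U ω a b (n+1) = detBc B U ω a b n
        + (if B (n+1) ω = 1 ∧ a < U (n+1) ω ∧ U (n+1) ω < b then (1:ℤ) else 0) :=
      Finset.sum_range_succ _ _
    have hEs : detE B U ω a (n+1) = detE B U ω a n +
        (if B (n+1) ω = 0 ∧ (S.filter (fun x => x ≤ a)) = ∅ then 1 else 0) := rfl
    rcases hB (n+1) with h0 | h1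
    · -- death step
      have hnot1 : ¬ (B (n+1) ω = 1) := by rw [h0]; norm_num
      have hSs : evoS B U ω (n+1) = if h : S.Nonempty then S.erase (S.min' h) else ∅ := by
        rw [evoS]; simp [hnot1, hS]
      rw [if_neg (by simp [hnot1]), if_pos h0, zero_sub] at hXs
      rw [if_neg (by simp [hnot1])] at hBcs
      have hsub : ∀ x ∈ evoS B U ω (n+1), x ∈ S := by
        intro x hx
        rw [hSs] at hx
        by_cases hne : S.Nonempty
        · rw [dif_pos hne] at hx; exact Finset.mem_of_mem_erase hx
        · rw [dif_neg hne] at hx; exact absurd hx (Finset.notMem_empty x)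
      have goal1 : ∀ x ∈ evoS B U ω (n+1), ∃ k, 1 ≤ k ∧ k ≤ n+1 ∧ U k ω = x := by
        intro x hx
        obtain ⟨k, hk1, hk2, hk3⟩ := IH1 x (hsub x hx)
        exact ⟨k, hk1, by omega, hk3⟩
      by_cases hlow : (S.filter (fun x => x ≤ a)) = ∅
      · -- no particle ≤ a
        rw [if_pos ⟨h0, hlow⟩] at hEs
        have hXE : detX B U ω a n + (detE B U ω a n : ℤ) = 0 := by
          rw [← IH2, hlow]; simp
        have hlow' : ((evoS B U ω (n+1)).filter (fun x => x ≤ a)) = ∅ := by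
          rw [Finset.eq_empty_iff_forall_notMem]
          intro x hx
          rw [Finset.mem_filter] at hx
          have hxS := hsub x hx.1
          rw [Finset.eq_empty_iff_forall_notMem] at hlow
          exact hlow x (Finset.mem_filter.mpr ⟨hxS, hx.2⟩)
        have hup_le : (((evoS B U ω (n+1)).filter (fun x => a < x ∧ x < b)).card : ℤ)
            ≤ ((S.filter (fun x => a < x ∧ x < b)).card : ℤ) ∧
            ((S.filter (fun x => a < x ∧ x < b)).card : ℤ) - 1
            ≤ (((evoS B U ω (n+1)).filter (fun x => a < x ∧ x < b)).card : ℤ) := by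
          rw [hSs]
          by_cases hne : S.Nonempty
          · rw [dif_pos hne, Finset.filter_erase]
            constructor
            · exact_mod_cast Nat.cast_le.mpr (Finset.card_erase_le)
            · by_cases hmem : S.min' hne ∈ S.filter (fun x => a < x ∧ x < b)
              · rw [Finset.cast_card_erase_of_mem hmem]
              · rw [Finset.erase_eq_of_notMem hmem]; omega
          · rw [dif_neg hne]
            have hSe : S = ∅ := Finset.not_nonempty_iff_eq_empty.mp hne
            rw [hSe]
            simp
        refine ⟨goal1, ?_, ?_, ?_, ?_⟩
        · rw [hlow', hXs, hEs]; push_cast; simp; omega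
        · rw [hBcs, hEs]; push_cast; omega
        · rw [hBcs]; omega
        · right; exact ⟨n, by omega, by rw [hEs]; push_cast; omega⟩
      · -- least particle ≤ a dies
        rw [if_neg (by intro h; exact hlow h.2)] at hEs
        have hlowne : (S.filter (fun x => x ≤ a)).Nonempty :=
          Finset.nonempty_iff_ne_empty.mpr hlow
        have hne : S.Nonempty := by
          obtain ⟨x, hx⟩ := hlowne
          exact ⟨x, (Finset.mem_filter.mp hx).1⟩
        rw [dif_pos hne] at hSs
        set m := S.min' hne with hm
        obtain ⟨x0, hx0⟩ := hlowne
        rw [Finset.mem_filter] at hx0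
        have hma : m ≤ a := le_trans (Finset.min'_le S x0 hx0.1) hx0.2
        have hmlow : m ∈ S.filter (fun x => x ≤ a) :=
          Finset.mem_filter.mpr ⟨Finset.min'_mem S hne, hma⟩
        have hmnot : m ∉ S.filter (fun x => a < x ∧ x < b) := by
          intro hmem
          exact absurd (Finset.mem_filter.mp hmem).2.1 (not_lt.mpr hma)
        have hclow : (((evoS B U ω (n+1)).filter (fun x => x ≤ a)).card : ℤ)
            = ((S.filter (fun x => x ≤ a)).card : ℤ) - 1 := by
          rw [hSs, Finset.filter_erase, Finset.cast_card_erase_of_mem hmlow]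
        have hcup : ((evoS B U ω (n+1)).filter (fun x => a < x ∧ x < b))
            = S.filter (fun x => a < x ∧ x < b) := by
          rw [hSs, Finset.filter_erase, Finset.erase_eq_of_notMem hmnot]
        refine ⟨goal1, ?_, ?_, ?_, ?_⟩
        · rw [hclow, hXs, hEs]; push_cast; omega
        · rw [hcup, hBcs, hEs]; push_cast; omega
        · rw [hcup, hBcs]; omega
        · rcases IH5 with h | ⟨j, hj, hj2⟩
          · left; rw [hEs]; omega
          · right; exact ⟨j, by omega, by rw [hEs]; push_cast; omega⟩
    · -- birth step
      have hnot0 : ¬ (B (n+1) ω = 0) := by rw [h1]; norm_num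
      set u := U (n+1) ω with hu
      have hSs : evoS B U ω (n+1) = insert u S := by rw [evoS]; simp [h1, hS]; rfl
      have huS : u ∉ S := by
        intro huS
        obtain ⟨k, hk1, hk2, hk3⟩ := IH1 u huS
        exact hinj k (n+1) (by omega) hk3
      rw [if_neg hnot0, sub_zero] at hXs
      rw [if_neg (by intro h; exact hnot0 h.1)] at hEs
      have goal1 : ∀ x ∈ evoS B U ω (n+1), ∃ k, 1 ≤ k ∧ k ≤ n+1 ∧ U k ω = x := by
        intro x hx
        rw [hSs, Finset.mem_insert] at hx
        rcases hx with rfl | hx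
        · exact ⟨n+1, by omega, by omega, rfl⟩
        · obtain ⟨k, hk1, hk2, hk3⟩ := IH1 x hx
          exact ⟨k, hk1, by omega, hk3⟩
      have goal5 : detE B U ω a (n+1) = 0 ∨
          ∃ j < n+1, (detE B U ω a (n+1) : ℤ) ≤ 1 - detX B U ω a j := by
        rcases IH5 with h | ⟨j, hj, hj2⟩
        · left; rw [hEs]; omega
        · right; exact ⟨j, by omega, by rw [hEs]; push_cast; omega⟩
      rcases le_or_gt u a with hua | hau
      · -- birth below a
        have hclow : (((evoS B U ω (n+1)).filter (fun x => x ≤ a)).card : ℤ)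
            = ((S.filter (fun x => x ≤ a)).card : ℤ) + 1 := by
          rw [hSs, Finset.filter_insert, if_pos hua, Finset.card_insert_of_notMem
            (fun h => huS (Finset.mem_filter.mp h).1)]
          push_cast; ring
        have hcup : ((evoS B U ω (n+1)).filter (fun x => a < x ∧ x < b))
            = S.filter (fun x => a < x ∧ x < b) := by
          rw [hSs, Finset.filter_insert, if_neg (by push_neg; intro h; exact absurd h (not_lt.mpr hua))]
        rw [if_pos ⟨h1, hua⟩] at hXs
        rw [if_neg (by push_neg; intro _ h; exact absurd h (not_lt.mpr hua))] at hBcs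
        refine ⟨goal1, ?_, ?_, ?_, goal5⟩
        · rw [hclow, hXs, hEs, IH2]; push_cast; ring
        · rw [hcup, hBcs, hEs]; push_cast; omega
        · rw [hcup, hBcs]; omega
      · -- birth above a
        rw [if_neg (by intro h; exact absurd h.2 (not_le.mpr hau))] at hXs
        have hclow : ((evoS B U ω (n+1)).filter (fun x => x ≤ a))
            = S.filter (fun x => x ≤ a) := by
          rw [hSs, Finset.filter_insert, if_neg (not_le.mpr hau)]
        rcases lt_or_ge u b with hub | hub
        · -- birth into (a,b)
          have hcup : (((evoS B U ω (n+1)).filter (fun x => a < x ∧ x < b)).card : ℤ)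
              = ((S.filter (fun x => a < x ∧ x < b)).card : ℤ) + 1 := by
            rw [hSs, Finset.filter_insert, if_pos ⟨hau, hub⟩, Finset.card_insert_of_notMem
              (fun h => huS (Finset.mem_filter.mp h).1)]
            push_cast; ring
          rw [if_pos ⟨h1, hau, hub⟩] at hBcs
          refine ⟨goal1, ?_, ?_, ?_, goal5⟩
          · rw [hclow, hXs, hEs, IH2]; push_cast; ring
          · rw [hcup, hBcs, hEs]; push_cast; omega
          · rw [hcup, hBcs]; omega
        · -- birth above b
          have hcup : ((evoS B U ω (n+1)).filter (fun x => a < x ∧ x < b))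
              = S.filter (fun x => a < x ∧ x < b) := by
            rw [hSs, Finset.filter_insert, if_neg (by push_neg; intro _; exact hub)]
          rw [if_neg (by push_neg; intro _ _; exact hub)] at hBcs
          refine ⟨goal1, ?_, ?_, ?_, goal5⟩
          · rw [hclow, hXs, hEs, IH2]; push_cast; ring
          · rw [hcup, hBcs, hEs]; push_cast; omega
          · rw [hcup, hBcs]; omega

end Det

lemma ecnt_tendsto (X : ℕ → ℤ) (E : ℕ → ℕ) (d : ℝ) (hd : 0 ≤ d)
    (hX : Filter.Tendsto (fun n => ((X n : ℝ)) / n) Filter.atTop (nhds d))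
    (hE : ∀ n, E n = 0 ∨ ∃ j < n, (E n : ℤ) ≤ 1 - X j) :
    Filter.Tendsto (fun n => (E n : ℝ) / n) Filter.atTop (nhds 0) := by
  rw [Metric.tendsto_atTop] at hX ⊢
  intro ε hε
  obtain ⟨N, hN⟩ := hX (ε/4) (by positivity)
  set K := max N 1 with hK
  set C : ℝ := ∑ j ∈ Finset.range K, |(X j : ℝ)| with hC
  have hC0 : 0 ≤ C := Finset.sum_nonneg (fun i _ => abs_nonneg _)
  have hCb : ∀ j < K, -(X j:ℝ) ≤ C := by
    intro j hj
    calc -(X j:ℝ) ≤ |(X j:ℝ)| := neg_le_abs _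
    _ ≤ C := Finset.single_le_sum (f := fun j => |(X j:ℝ)|)
        (fun i _ => abs_nonneg _) (Finset.mem_range.mpr hj)
  have hXge : ∀ j, K ≤ j → -(X j : ℝ) ≤ (ε/4) * j := by
    intro j hj
    have hj1 : (1:ℕ) ≤ j := le_trans (le_max_right N 1) hj
    have hjpos : (0:ℝ) < j := by exact_mod_cast hj1
    have h1 := hN j (le_trans (le_max_left N 1) hj)
    rw [Real.dist_eq] at h1
    have h2 : -(ε/4) ≤ (X j:ℝ)/j := by
      rcases abs_lt.mp h1 with ⟨h3, _⟩
      linarith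
    have h3 : -(ε/4) * j ≤ (X j:ℝ) := (le_div_iff₀ hjpos).mp h2
    linarith
  obtain ⟨M, hM⟩ := exists_nat_gt ((1 + C) / (ε/2))
  refine ⟨max M 1, fun n hn => ?_⟩
  have hn1 : (1:ℕ) ≤ n := le_trans (le_max_right M 1) hn
  have hnpos : (0:ℝ) < n := by exact_mod_cast hn1
  rcases hE n with h | ⟨j, hjn, hj⟩
  · rw [Real.dist_eq, h]
    simpa using hε
  · have hEb : (E n : ℝ) ≤ 1 - (X j:ℝ) := by exact_mod_cast hj
    have hXj : -(X j:ℝ) ≤ C + (ε/4) * n := by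
      rcases lt_or_ge j K with hcase | hcase
      · have h4 := hCb j hcase
        have h5 : (0:ℝ) ≤ (ε/4) * n := by positivity
        linarith
      · have h4 := hXge j hcase
        have h5 : (j:ℝ) ≤ n := by exact_mod_cast le_of_lt hjn
        have h6 : (ε/4) * j ≤ (ε/4) * n := by
          apply mul_le_mul_of_nonneg_left h5 (by positivity)
        linarith
    have hEb2 : (E n:ℝ) ≤ 1 + C + (ε/4)*n := by linarith
    rw [Real.dist_eq, sub_zero, abs_of_nonneg (by positivity)]
    have h2 : (E n:ℝ)/n ≤ (1+C)/n + ε/4 := by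
      calc (E n:ℝ)/n ≤ (1+C+(ε/4)*n)/n := (div_le_div_iff_of_pos_right hnpos).mpr hEb2
      _ = (1+C)/n + ε/4 := by rw [add_div, mul_div_assoc, div_self (ne_of_gt hnpos), mul_one]
    have hMn : (M:ℝ) ≤ n := by exact_mod_cast le_trans (le_max_left M 1) hn
    have h3 : (1+C)/n < ε/2 := by
      rw [div_lt_iff₀ hnpos]
      rw [div_lt_iff₀ (by positivity : (0:ℝ) < ε/2)] at hM
      have h7 : (M:ℝ)*(ε/2) ≤ (n:ℝ)*(ε/2) := mul_le_mul_of_nonneg_right hMn (by positivity)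
      linarith
    linarith

/-- Generalized model: fitnesses are i.i.d. with an atomless distribution `μ` and
`f_c` satisfies `μ((-∞, f_c)) = q/p`. Then for all `f_c ≤ a < b`, almost surely
`(1/n) |S_n ∩ (a,b)| → p μ((a,b))`. -/
theorem stmt12 {Ω : Type*} [MeasurableSpace Ω] (P : Measure Ω) [IsProbabilityMeasure P]
    (p : ℝ) (hp : 1 / 2 < p) (hp1 : p < 1)
    (μ : Measure ℝ) [IsProbabilityMeasure μ] [NullSingletonClass μ]
    (B U : ℕ → Ω → ℝ)
    (hmB : ∀ n, Measurable (B n)) (hmU : ∀ n, Measurable (U n))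
    (hB01 : ∀ n ω, B n ω = 0 ∨ B n ω = 1)
    (hindep : iIndepFun (Sum.elim B U) P)
    (hBdist : ∀ n, Measure.map (B n) P
      = ENNReal.ofReal p • Measure.dirac (1 : ℝ) + ENNReal.ofReal (1 - p) • Measure.dirac (0 : ℝ))
    (hUdist : ∀ n, Measure.map (U n) P = μ)
    (fc : ℝ) (hfc : μ (Set.Iio fc) = ENNReal.ofReal ((1 - p) / p))
    (a b : ℝ) (ha : fc ≤ a) (hab : a < b) :
    ∀ᵐ ω ∂P, Tendsto
      (fun n : ℕ => (((evoS B U ω n).filter (fun x => a < x ∧ x < b)).card : ℝ) / n)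
      atTop (nhds (p * (μ (Set.Ioo a b)).toReal)) := by
  classical
  have hppos : (0:ℝ) < p := by linarith
  set νp : Measure ℝ := ENNReal.ofReal p • Measure.dirac (1:ℝ)
      + ENNReal.ofReal (1-p) • Measure.dirac (0:ℝ) with hνp
  set V : ℕ → Ω → ℝ × ℝ := fun i ω => (B (i+1) ω, U (i+1) ω) with hVdef
  have hmSum : ∀ k : ℕ ⊕ ℕ, Measurable (Sum.elim B U k) := by
    intro k; rcases k with k | k
    · exact hmB k
    · exact hmU k
  have hVmeas : ∀ i, Measurable (V i) := fun i => (hmB _).prodMk (hmU _)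
  have hVindep : ∀ i j, i ≠ j → IndepFun (V i) (V j) P := by
    intro i j hij
    exact hindep.indepFun_prodMk_prodMk hmSum (Sum.inl (i+1)) (Sum.inr (i+1))
      (Sum.inl (j+1)) (Sum.inr (j+1)) (by simp; omega) (by simp) (by simp) (by simp; omega)
  have hVmap : ∀ i, Measure.map (V i) P = νp.prod μ := by
    intro i
    have hBU : IndepFun (B (i+1)) (U (i+1)) P :=
      hindep.indepFun (show (Sum.inl (i+1) : ℕ ⊕ ℕ) ≠ Sum.inr (i+1) by simp)
    rw [show V i = fun ω => (B (i+1) ω, U (i+1) ω) from rfl,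
      (indepFun_iff_map_prod_eq_prod_map_map (hmB (i+1)).aemeasurable
        (hmU (i+1)).aemeasurable).mp hBU, hBdist, hUdist]
  have hVident : ∀ i, IdentDistrib (V i) (V 0) P P := fun i =>
    ⟨(hVmeas i).aemeasurable, (hVmeas 0).aemeasurable, by rw [hVmap, hVmap]⟩
  have hν1 : νp {1} = ENNReal.ofReal p := by rw [hνp]; simp [Measure.dirac_apply]
  have hν0 : νp {0} = ENNReal.ofReal (1-p) := by rw [hνp]; simp [Measure.dirac_apply]
  have hT0 : MeasurableSet ({(1:ℝ)} ×ˢ Set.Ioo a b) :=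
    (measurableSet_singleton 1).prod measurableSet_Ioo
  have hT1 : MeasurableSet ({(1:ℝ)} ×ˢ Set.Iic a) :=
    (measurableSet_singleton 1).prod measurableSet_Iic
  have hT2 : MeasurableSet ({(0:ℝ)} ×ˢ (Set.univ : Set ℝ)) :=
    (measurableSet_singleton 0).prod MeasurableSet.univ
  have hint : ∀ (T : Set (ℝ×ℝ)), MeasurableSet T → ∀ i,
      Integrable (fun ω => Set.indicator T (fun _ => (1:ℝ)) (V i ω)) P := by
    intro T hT i
    refine Integrable.mono' (integrable_const (1:ℝ))
      ((measurable_const.indicator hT).comp (hVmeas i)).aestronglyMeasurable ?_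
    filter_upwards with ω
    rw [Set.indicator_apply]
    split_ifs <;> simp
  have hEind : ∀ (T : Set (ℝ×ℝ)), MeasurableSet T → ∀ i,
      ∫ ω, Set.indicator T (fun _ => (1:ℝ)) (V i ω) ∂P = ((νp.prod μ) T).toReal := by
    intro T hT i
    rw [← MeasureTheory.integral_map (hVmeas i).aemeasurable
      (measurable_const.indicator hT).aestronglyMeasurable, hVmap,
      MeasureTheory.integral_indicator_const (1:ℝ) hT, smul_eq_mul, mul_one]; rfl
  set Y : ℕ → Ω → ℝ :=
    fun i ω => Set.indicator ({(1:ℝ)} ×ˢ Set.Ioo a b) (fun _ => (1:ℝ)) (V i ω) with hYdef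
  set Z : ℕ → Ω → ℝ :=
    fun i ω => Set.indicator ({(1:ℝ)} ×ˢ Set.Iic a) (fun _ => (1:ℝ)) (V i ω)
      - Set.indicator ({(0:ℝ)} ×ˢ (Set.univ : Set ℝ)) (fun _ => (1:ℝ)) (V i ω) with hZdef
  have hgY : Measurable (fun x : ℝ×ℝ =>
      Set.indicator ({(1:ℝ)} ×ˢ Set.Ioo a b) (fun _ => (1:ℝ)) x) :=
    measurable_const.indicator hT0
  have hgZ : Measurable (fun x : ℝ×ℝ =>
      Set.indicator ({(1:ℝ)} ×ˢ Set.Iic a) (fun _ => (1:ℝ)) x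
        - Set.indicator ({(0:ℝ)} ×ˢ (Set.univ : Set ℝ)) (fun _ => (1:ℝ)) x) :=
    (measurable_const.indicator hT1).sub (measurable_const.indicator hT2)
  have hYlln : ∀ᵐ ω ∂P, Tendsto (fun n : ℕ => (∑ i ∈ Finset.range n, Y i ω) / n) atTop
      (nhds (p * (μ (Set.Ioo a b)).toReal)) := by
    have h := strong_law_ae_real Y (hint _ hT0 0)
      (fun i j hij => (hVindep i j hij).comp hgY hgY)
      (fun i => (hVident i).comp hgY)
    have hE : (∫ ω, Y 0 ω ∂P) = p * (μ (Set.Ioo a b)).toReal := by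
      rw [show (∫ ω, Y 0 ω ∂P)
          = ∫ ω, Set.indicator ({(1:ℝ)} ×ˢ Set.Ioo a b) (fun _ => (1:ℝ)) (V 0 ω) ∂P from rfl,
        hEind _ hT0 0, Measure.prod_prod, hν1, ENNReal.toReal_mul,
        ENNReal.toReal_ofReal hppos.le]
    rwa [hE] at h
  set d : ℝ := p * (μ (Set.Iic a)).toReal - (1-p) with hd_def
  have hIic : (1-p)/p ≤ (μ (Set.Iic a)).toReal := by
    have h1 : μ (Set.Iio fc) ≤ μ (Set.Iic a) :=
      measure_mono (fun x hx => le_trans (le_of_lt hx) ha)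
    rw [hfc] at h1
    have h2 := ENNReal.toReal_mono (measure_ne_top μ _) h1
    rwa [ENNReal.toReal_ofReal (div_nonneg (by linarith) (by linarith))] at h2
  have hd0 : 0 ≤ d := by
    have h3 := mul_le_mul_of_nonneg_left hIic hppos.le
    have h4 : p * ((1-p)/p) = 1-p := by field_simp
    rw [hd_def]; linarith
  have hZlln : ∀ᵐ ω ∂P, Tendsto (fun n : ℕ => (∑ i ∈ Finset.range n, Z i ω) / n) atTop
      (nhds d) := by
    have h := strong_law_ae_real Z ((hint _ hT1 0).sub (hint _ hT2 0))
      (fun i j hij => (hVindep i j hij).comp hgZ hgZ)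
      (fun i => (hVident i).comp hgZ)
    have hE : (∫ ω, Z 0 ω ∂P) = d := by
      rw [show (∫ ω, Z 0 ω ∂P)
          = ∫ ω, (Set.indicator ({(1:ℝ)} ×ˢ Set.Iic a) (fun _ => (1:ℝ)) (V 0 ω)
            - Set.indicator ({(0:ℝ)} ×ˢ (Set.univ : Set ℝ)) (fun _ => (1:ℝ)) (V 0 ω)) ∂P
          from rfl,
        integral_sub (hint _ hT1 0) (hint _ hT2 0), hEind _ hT1 0, hEind _ hT2 0,
        Measure.prod_prod, Measure.prod_prod, hν1, hν0, measure_univ, mul_one,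
        ENNReal.toReal_mul, ENNReal.toReal_ofReal hppos.le,
        ENNReal.toReal_ofReal (by linarith : (0:ℝ) ≤ 1-p), hd_def]
    rwa [hE] at h
  have hinj_ae : ∀ᵐ ω ∂P, ∀ i j, i ≠ j → U i ω ≠ U j ω := by
    rw [ae_all_iff]
    intro i
    rw [ae_all_iff]
    intro j
    by_cases hij : i = j
    · subst hij
      filter_upwards with ω h
      exact absurd rfl h
    · have hUij : IndepFun (U i) (U j) P :=
        hindep.indepFun (show (Sum.inr i : ℕ ⊕ ℕ) ≠ Sum.inr j by simp [hij])
      have hmap : Measure.map (fun ω => (U i ω, U j ω)) P = μ.prod μ := by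
        rw [(indepFun_iff_map_prod_eq_prod_map_map (hmU i).aemeasurable
          (hmU j).aemeasurable).mp hUij, hUdist, hUdist]
      have hD : MeasurableSet {x : ℝ × ℝ | x.1 = x.2} :=
        measurableSet_eq_fun measurable_fst measurable_snd
      have h0 : (μ.prod μ) {x : ℝ × ℝ | x.1 = x.2} = 0 := by
        rw [Measure.prod_apply hD]
        have h1 : ∀ x : ℝ, μ (Prod.mk x ⁻¹' {y : ℝ × ℝ | y.1 = y.2}) = 0 := by
          intro x
          have he : (Prod.mk x ⁻¹' {y : ℝ × ℝ | y.1 = y.2}) = {x} := by ext y; simp [eq_comm]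
          rw [he, measure_singleton]
        simp [h1]
      have hP0 : P {ω | U i ω = U j ω} = 0 := by
        have h2 : {ω | U i ω = U j ω} = (fun ω => (U i ω, U j ω)) ⁻¹' {x : ℝ × ℝ | x.1 = x.2} :=
          rfl
        rw [h2, ← Measure.map_apply ((hmU i).prodMk (hmU j)) hD, hmap, h0]
      rw [ae_iff]
      refine measure_mono_null ?_ hP0
      intro ω hω
      simp only [Set.mem_setOf_eq, _root_.not_imp, not_not] at hω
      exact hω.2
  filter_upwards [hYlln, hZlln, hinj_ae] with ω hYω hZω hinjω
  have hdm := det_main B U ω a b (fun k => hB01 k ω) hinjω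
  have hBcEq : ∀ n : ℕ, ((detBc B U ω a b n : ℝ)) = ∑ i ∈ Finset.range n, Y i ω := by
    intro n
    rw [detBc, Int.cast_sum]
    apply Finset.sum_congr rfl
    intro i _
    by_cases h : B (i+1) ω = 1 ∧ a < U (i+1) ω ∧ U (i+1) ω < b
    · rw [if_pos h]
      simp only [hYdef]
      have hmem : V i ω ∈ ({(1:ℝ)} ×ˢ Set.Ioo a b) := by
        simp only [hVdef, Set.mem_prod, Set.mem_singleton_iff, Set.mem_Ioo]
        exact ⟨h.1, h.2⟩
      rw [Set.indicator_of_mem hmem]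
      norm_num
    · rw [if_neg h]
      simp only [hYdef]
      have hmem : V i ω ∉ ({(1:ℝ)} ×ˢ Set.Ioo a b) := by
        simp only [hVdef, Set.mem_prod, Set.mem_singleton_iff, Set.mem_Ioo]
        tauto
      rw [Set.indicator_of_notMem hmem]
      norm_num
  have hXEq : ∀ n : ℕ, ((detX B U ω a n : ℝ)) = ∑ i ∈ Finset.range n, Z i ω := by
    intro n
    rw [detX, Int.cast_sum]
    apply Finset.sum_congr rfl
    intro i _
    rw [Int.cast_sub]
    simp only [hZdef]
    congr 1
    · by_cases h : B (i+1) ω = 1 ∧ U (i+1) ω ≤ a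
      · rw [if_pos h]
        have hmem : V i ω ∈ ({(1:ℝ)} ×ˢ Set.Iic a) := by
          simp only [hVdef, Set.mem_prod, Set.mem_singleton_iff, Set.mem_Iic]
          exact h
        rw [Set.indicator_of_mem hmem]
        norm_num
      · rw [if_neg h]
        have hmem : V i ω ∉ ({(1:ℝ)} ×ˢ Set.Iic a) := by
          simp only [hVdef, Set.mem_prod, Set.mem_singleton_iff, Set.mem_Iic]
          tauto
        rw [Set.indicator_of_notMem hmem]
        norm_num
    · by_cases h : B (i+1) ω = 0
      · rw [if_pos h]
        have hmem : V i ω ∈ ({(0:ℝ)} ×ˢ (Set.univ : Set ℝ)) := by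
          simp only [hVdef, Set.mem_prod, Set.mem_singleton_iff, Set.mem_univ, and_true]
          exact h
        rw [Set.indicator_of_mem hmem]
        norm_num
      · rw [if_neg h]
        have hmem : V i ω ∉ ({(0:ℝ)} ×ˢ (Set.univ : Set ℝ)) := by
          simp only [hVdef, Set.mem_prod, Set.mem_singleton_iff, Set.mem_univ, and_true]
          exact h
        rw [Set.indicator_of_notMem hmem]
        norm_num
  have hXtend : Tendsto (fun n : ℕ => ((detX B U ω a n : ℝ))/n) atTop (nhds d) := by
    have he : (fun n : ℕ => ((detX B U ω a n : ℝ))/n)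
        = fun n : ℕ => (∑ i ∈ Finset.range n, Z i ω)/n := funext (fun n => by rw [hXEq n])
    rw [he]; exact hZω
  have hEtend := ecnt_tendsto (detX B U ω a) (detE B U ω a) d hd0 hXtend
    (fun n => (hdm n).2.2.2.2)
  have hlow : Tendsto (fun n : ℕ => (∑ i ∈ Finset.range n, Y i ω)/n
      - (detE B U ω a n : ℝ)/n) atTop (nhds (p * (μ (Set.Ioo a b)).toReal)) := by
    have := hYω.sub hEtend
    simpa using this
  apply tendsto_of_tendsto_of_tendsto_of_le_of_le hlow hYω
  · intro n
    rcases Nat.eq_zero_or_pos n with rfl | hn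
    · simp [evoS, detE]
    · have hnp : (0:ℝ) < n := by exact_mod_cast hn
      have hineq := (hdm n).2.2.1
      have hr : ((detBc B U ω a b n : ℝ)) - (detE B U ω a n : ℝ)
          ≤ (((evoS B U ω n).filter (fun x => a < x ∧ x < b)).card : ℝ) := by
        exact_mod_cast hineq
      rw [hBcEq n] at hr
      dsimp only
      rw [← sub_div]
      exact (div_le_div_iff_of_pos_right hnp).mpr hr
  · intro n
    rcases Nat.eq_zero_or_pos n with rfl | hn
    · simp [evoS]
    · have hnp : (0:ℝ) < n := by exact_mod_cast hn
      have hineq := (hdm n).2.2.2.1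
      have hr : (((evoS B U ω n).filter (fun x => a < x ∧ x < b)).card : ℝ)
          ≤ ((detBc B U ω a b n : ℝ)) := by exact_mod_cast hineq
      rw [hBcEq n] at hr
      dsimp only
      exact (div_le_div_iff_of_pos_right hnp).mpr hr
end
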